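/- arXiv:1809.04396 — 3 statements merged into one kernel-verified Lean document; each statement's English description precedes it below -/
import Mathlib

section
/- Let G = (V, E, w) be a weighted hypergraph with positive degrees, let x₁, x₂ ∈ ℝ^V and set x̄ᵢ = D⁻¹xᵢ. For i = 1, 2 choose, for each hyperedge e, a vector b_e^{(i)} ∈ argmax_{b ∈ B_e} bᵀx̄ᵢ, and set yᵢ = ∑_{e ∈ E} w(e) ((b_e^{(i)})ᵀ x̄ᵢ) b_e^{(i)} ∈ 𝓛_G(xᵢ). Then ⟨y₁ − y₂, x₁ − x₂⟩_{D⁻¹} ≥ ∑_{e ∈ E} w(e) ((b_e^{(1)})ᵀ x̄₁ − (b_e^{(2)})ᵀ x̄₂)². -/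
open Finset
open scoped Classical

structure WHG (V : Type) [Fintype V] [DecidableEq V] where
  E : Type
  [fintypeE : Fintype E]
  mem : E → Finset V
  mem_nonempty : ∀ e, (mem e).Nonempty
  w : E → ℝ
  w_pos : ∀ e, 0 < w e

namespace WHG

attribute [instance] WHG.fintypeE

variable {V : Type} [Fintype V] [DecidableEq V] (G : WHG V)

/-- Degree of a vertex. -/
noncomputable def deg (v : V) : ℝ := ∑ e : G.E, if v ∈ G.mem e then G.w e else 0

/-- Volume of a vertex set. -/
noncomputable def vol (S : Finset V) : ℝ := ∑ v ∈ S, G.deg v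

/-- Euclidean dot product. -/
def dot (x y : V → ℝ) : ℝ := ∑ v, x v * y v

/-- Inner product weighted by `D⁻¹`. -/
noncomputable def innerD (x y : V → ℝ) : ℝ := ∑ v, x v * y v / G.deg v

/-- Norm associated to `innerD`. -/
noncomputable def normD (x : V → ℝ) : ℝ := Real.sqrt (G.innerD x x)

/-- `D⁻¹ x`. -/
noncomputable def Dinv (x : V → ℝ) : V → ℝ := fun v => x v / G.deg v

/-- Base polytope `B_e`. -/
def base (e : G.E) : Set (V → ℝ) :=
  convexHull ℝ {b : V → ℝ | ∃ u ∈ G.mem e, ∃ v ∈ G.mem e, b = Pi.single u 1 - Pi.single v 1}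

/-- Multi-valued hypergraph Laplacian `L_G`. -/
def Lap (x : V → ℝ) : Set (V → ℝ) :=
  {y | ∃ b : G.E → V → ℝ,
    (∀ e, b e ∈ G.base e ∧ ∀ b' ∈ G.base e, dot b' x ≤ dot (b e) x) ∧
    y = ∑ e : G.E, (G.w e * dot (b e) x) • b e}

/-- Normalized Laplacian `𝓛_G`. -/
noncomputable def nLap (x : V → ℝ) : Set (V → ℝ) := G.Lap (G.Dinv x)

/-- Total weight of hyperedges crossing `S`. -/
noncomputable def cut (S : Finset V) : ℝ :=
  ∑ e : G.E, if (G.mem e ∩ S).Nonempty ∧ (G.mem e \ S).Nonempty then G.w e else 0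

/-- Conductance of a vertex set. -/
noncomputable def cond (S : Finset V) : ℝ := G.cut S / min (G.vol S) (G.vol Sᶜ)

/-- Conductance of the hypergraph. -/
noncomputable def condG : ℝ :=
  sInf {c | ∃ S : Finset V, S.Nonempty ∧ S ≠ Finset.univ ∧ c = G.cond S}

/-- Connectivity of a hypergraph. -/
def Connected : Prop :=
  ∀ S : Finset V, S.Nonempty → S ≠ Finset.univ →
    ∃ e : G.E, (G.mem e ∩ S).Nonempty ∧ (G.mem e \ S).Nonempty

/-- The stationary vector `π`. -/
noncomputable def piVec : V → ℝ := fun v => G.deg v / G.vol Finset.univ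

/-- Solution of the heat equation `(HE; s)`. -/
def IsHeatSol (s : V → ℝ) (ρ : ℝ → V → ℝ) : Prop :=
  (∃ K : NNReal, LipschitzOnWith K ρ (Set.Ici 0)) ∧ ρ 0 = s ∧
  (∀ᵐ t : ℝ ∂MeasureTheory.volume, 0 ≤ t → ∃ y ∈ G.nLap (ρ t), HasDerivAt ρ (-y) t)

/-- Sweep sets of a vector. -/
def sweep (x : V → ℝ) : Set (Finset V) :=
  {S | ∃ τ : ℝ, S = Finset.univ.filter (fun v => τ ≤ x v) ∨
                S = Finset.univ.filter (fun v => x v ≤ τ)}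

/-- `κ_{T,t}`: the least conductance of nontrivial sweep sets of `ρ_ξ`, `ξ ∈ [T,t]`. -/
noncomputable def kappa (ρ : ℝ → V → ℝ) (T t : ℝ) : ℝ :=
  sInf {c | ∃ ξ ∈ Set.Icc T t, ∃ S ∈ sweep (ρ ξ),
    S.Nonempty ∧ S ≠ Finset.univ ∧ c = G.cond S}

/-- The family `𝒢(G, x)` of collapsed weighted graphs. -/
def GraphFamily (x : V → ℝ) (A : Matrix V V ℝ) : Prop :=
  A.IsSymm ∧ (∀ u v, 0 ≤ A u v) ∧ (∀ v, ∑ u, A v u = G.deg v) ∧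
  ∃ w' : G.E → V → V → ℝ,
    (∀ e u v, 0 ≤ w' e u v) ∧
    (∀ e u v, w' e u v ≠ 0 →
      (u ∈ G.mem e ∧ ∀ u' ∈ G.mem e, x u' ≤ x u) ∧
      (v ∈ G.mem e ∧ ∀ v' ∈ G.mem e, x v ≤ x v')) ∧
    (∀ e, ∑ u : V, ∑ v : V, w' e u v = G.w e) ∧
    (∀ u v, u ≠ v → A u v = ∑ e : G.E, (w' e u v + w' e v u))


lemma zero_mem_base (e : G.E) : (0 : V → ℝ) ∈ G.base e := by
  obtain ⟨u, hu⟩ := G.mem_nonempty e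
  exact subset_convexHull ℝ _ ⟨u, hu, u, hu, by simp⟩

lemma dot_zero' (z : V → ℝ) : dot (0 : V → ℝ) z = 0 := by
  simp [dot]

lemma dot_sub' (x y z : V → ℝ) : dot (x - y) z = dot x z - dot y z := by
  simp [dot, sub_mul, Finset.sum_sub_distrib]

lemma dot_sum' {ι : Type} [Fintype ι] (f : ι → V → ℝ) (z : V → ℝ) :
    dot (∑ i, f i) z = ∑ i, dot (f i) z := by
  simp only [dot, Finset.sum_apply, Finset.sum_mul]
  rw [Finset.sum_comm]

lemma dot_smul' (c : ℝ) (b z : V → ℝ) : dot (c • b) z = c * dot b z := by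
  simp [dot, Finset.mul_sum, mul_assoc]

lemma innerD_eq_dot (x y : V → ℝ) : G.innerD x y = dot x (G.Dinv y) := by
  simp [innerD, dot, Dinv, mul_div_assoc]

lemma Dinv_sub (x y : V → ℝ) : G.Dinv (x - y) = G.Dinv x - G.Dinv y := by
  funext v; simp [Dinv, sub_div]

/-- quantitative monotonicity of the normalized Laplacian. -/
theorem nLap_strong_monotone {V : Type} [Fintype V] [DecidableEq V] (G : WHG V)
    (hd : ∀ v, 0 < G.deg v) (x₁ x₂ : V → ℝ) (b₁ b₂ : G.E → V → ℝ)
    (hb₁ : ∀ e, b₁ e ∈ G.base e ∧ ∀ b' ∈ G.base e, dot b' (G.Dinv x₁) ≤ dot (b₁ e) (G.Dinv x₁))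
    (hb₂ : ∀ e, b₂ e ∈ G.base e ∧ ∀ b' ∈ G.base e, dot b' (G.Dinv x₂) ≤ dot (b₂ e) (G.Dinv x₂))
    (y₁ y₂ : V → ℝ)
    (hy₁ : y₁ = ∑ e : G.E, (G.w e * dot (b₁ e) (G.Dinv x₁)) • b₁ e)
    (hy₂ : y₂ = ∑ e : G.E, (G.w e * dot (b₂ e) (G.Dinv x₂)) • b₂ e) :
    ∑ e : G.E, G.w e * (dot (b₁ e) (G.Dinv x₁) - dot (b₂ e) (G.Dinv x₂)) ^ 2
      ≤ G.innerD (y₁ - y₂) (x₁ - x₂) := by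
  have key : G.innerD (y₁ - y₂) (x₁ - x₂)
      = ∑ e : G.E,
          (G.w e * dot (b₁ e) (G.Dinv x₁) * (dot (b₁ e) (G.Dinv x₁) - dot (b₁ e) (G.Dinv x₂))
           - G.w e * dot (b₂ e) (G.Dinv x₂) * (dot (b₂ e) (G.Dinv x₁) - dot (b₂ e) (G.Dinv x₂))) := by
    rw [G.innerD_eq_dot, G.Dinv_sub, dot_sub', hy₁, hy₂, dot_sum', dot_sum',
      ← Finset.sum_sub_distrib]
    refine Finset.sum_congr rfl fun e _ => ?_
    rw [dot_smul', dot_smul']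
    have h1 : dot (b₁ e) (G.Dinv x₁ - G.Dinv x₂)
        = dot (b₁ e) (G.Dinv x₁) - dot (b₁ e) (G.Dinv x₂) := by
      simp [dot, mul_sub, Finset.sum_sub_distrib]
    have h2 : dot (b₂ e) (G.Dinv x₁ - G.Dinv x₂)
        = dot (b₂ e) (G.Dinv x₁) - dot (b₂ e) (G.Dinv x₂) := by
      simp [dot, mul_sub, Finset.sum_sub_distrib]
    rw [h1, h2]
  rw [key]
  refine Finset.sum_le_sum fun e _ => ?_
  have hw := G.w_pos e
  have ha : 0 ≤ dot (b₁ e) (G.Dinv x₁) := by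
    have := (hb₁ e).2 0 (G.zero_mem_base e)
    rwa [dot_zero'] at this
  have hc : 0 ≤ dot (b₂ e) (G.Dinv x₂) := by
    have := (hb₂ e).2 0 (G.zero_mem_base e)
    rwa [dot_zero'] at this
  have hp : dot (b₁ e) (G.Dinv x₂) ≤ dot (b₂ e) (G.Dinv x₂) := (hb₂ e).2 _ (hb₁ e).1
  have hq : dot (b₂ e) (G.Dinv x₁) ≤ dot (b₁ e) (G.Dinv x₁) := (hb₁ e).2 _ (hb₂ e).1
  nlinarith [mul_nonneg hw.le (mul_nonneg ha (sub_nonneg.2 hp)), mul_nonneg hw.le (mul_nonneg hc (sub_nonneg.2 hq))]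

end WHG
end

section
/- Let G = (V, E, w) be a weighted hypergraph with positive degrees. The range of I + 𝓛_G is all of ℝ^V: for every b ∈ ℝ^V there exist x ∈ ℝ^V and y ∈ 𝓛_G(x) such that x + y = b. (Together with monotonicity, this means the monotone operator 𝓛_G is maximal.) -/
open Finset
open scoped Classical

namespace WHG

variable {V : Type} [Fintype V] [DecidableEq V] (G : WHG V)

/-! ### Auxiliary material for the maximality theorem -/

section Maximality

set_option linter.unusedSectionVars false

variable {V : Type} [Fintype V] [DecidableEq V]

/-- Generator pairs of a hyperedge. -/
noncomputable def pairsAux (G : WHG V) (e : G.E) : Finset (V × V) := G.mem e ×ˢ G.mem e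

lemma pairsAux_nonempty (G : WHG V) (e : G.E) : (G.pairsAux e).Nonempty :=
  (G.mem_nonempty e).product (G.mem_nonempty e)

/-- The vector `1_u - 1_v`. -/
noncomputable def pvec (p : V × V) : V → ℝ := Pi.single p.1 1 - Pi.single p.2 1

lemma dot_single (u : V) (z : V → ℝ) : dot (Pi.single u 1) z = z u := by
  simp [dot, Pi.single_apply, ite_mul]

lemma dot_sub_left (a b z : V → ℝ) : dot (a - b) z = dot a z - dot b z := by
  simp [dot, sub_mul, Finset.sum_sub_distrib]

lemma dot_pvec (p : V × V) (z : V → ℝ) : dot (pvec p) z = z p.1 - z p.2 := by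
  rw [pvec, dot_sub_left, dot_single, dot_single]

lemma isLinearMap_dot (z : V → ℝ) : IsLinearMap ℝ (fun a : V → ℝ => dot a z) := by
  constructor
  · intro a b; simp [dot, add_mul, Finset.sum_add_distrib]
  · intro c a; simp [dot, Finset.mul_sum, mul_assoc]

/-- The support function `σ_e(z)`. -/
noncomputable def sig (G : WHG V) (e : G.E) (z : V → ℝ) : ℝ :=
  (G.pairsAux e).sup' (G.pairsAux_nonempty e) fun p => z p.1 - z p.2

lemma pvec_mem_base (G : WHG V) (e : G.E) {p : V × V} (hp : p ∈ G.pairsAux e) :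
    pvec p ∈ G.base e := by
  rw [pairsAux, Finset.mem_product] at hp
  exact subset_convexHull ℝ _ ⟨p.1, hp.1, p.2, hp.2, rfl⟩

lemma dot_le_sig (G : WHG V) (e : G.E) (z : V → ℝ) {a : V → ℝ} (ha : a ∈ G.base e) :
    dot a z ≤ G.sig e z := by
  have hsub : {b : V → ℝ | ∃ u ∈ G.mem e, ∃ v ∈ G.mem e, b = Pi.single u 1 - Pi.single v 1}
      ⊆ {a : V → ℝ | dot a z ≤ G.sig e z} := by
    rintro _ ⟨u, hu, v, hv, rfl⟩
    have hmem : ((u, v) : V × V) ∈ G.pairsAux e := by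
      simp [pairsAux, Finset.mem_product, hu, hv]
    have : dot (pvec (u, v)) z ≤ G.sig e z := by
      rw [dot_pvec, sig]; exact Finset.le_sup' (fun p : V × V => z p.1 - z p.2) hmem
    simpa [pvec] using this
  exact convexHull_min hsub (convex_halfSpace_le (isLinearMap_dot z) _) ha

/-- Maximizing pairs. -/
noncomputable def amax (G : WHG V) (e : G.E) (z : V → ℝ) : Finset (V × V) :=
  (G.pairsAux e).filter fun p => z p.1 - z p.2 = G.sig e z

lemma amax_nonempty (G : WHG V) (e : G.E) (z : V → ℝ) : (G.amax e z).Nonempty := by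
  obtain ⟨p, hp, hpe⟩ := Finset.exists_mem_eq_sup' (G.pairsAux_nonempty e)
    (fun p : V × V => z p.1 - z p.2)
  exact ⟨p, Finset.mem_filter.2 ⟨hp, hpe.symm⟩⟩

/-- Danskin directional term. -/
noncomputable def meAux (G : WHG V) (e : G.E) (z h : V → ℝ) : ℝ :=
  (G.amax e z).sup' (G.amax_nonempty e z) fun p => h p.1 - h p.2

/-- The objective functional. -/
noncomputable def Ffun (G : WHG V) (bb z : V → ℝ) : ℝ :=
  (∑ v, G.deg v * z v ^ 2) / 2 - dot bb z + ∑ e, G.w e / 2 * G.sig e z ^ 2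

lemma continuous_sig (G : WHG V) (e : G.E) : Continuous fun z : V → ℝ => G.sig e z := by
  have key : ∀ (s : Finset (V × V)) (hs : s.Nonempty),
      Continuous fun z : V → ℝ => s.sup' hs fun p => z p.1 - z p.2 := by
    intro s hs
    induction hs using Finset.Nonempty.cons_induction with
    | singleton p =>
      simp only [Finset.sup'_singleton]
      exact (continuous_apply p.1).sub (continuous_apply p.2)
    | cons p s hp hs ih =>
      simp only [Finset.sup'_cons hs]
      exact ((continuous_apply p.1).sub (continuous_apply p.2)).max ih
  exact key _ _

lemma continuous_Ffun (G : WHG V) (bb : V → ℝ) : Continuous (G.Ffun bb) := by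
  unfold Ffun dot
  refine Continuous.add (Continuous.sub ?_ ?_) ?_
  · exact (continuous_finset_sum _ fun v _ =>
      continuous_const.mul ((continuous_apply v).pow 2)).div_const 2
  · exact continuous_finset_sum _ fun v _ => continuous_const.mul (continuous_apply v)
  · exact continuous_finset_sum _ fun e _ =>
      continuous_const.mul ((G.continuous_sig e).pow 2)

lemma exists_global_min (G : WHG V) (hd : ∀ v, 0 < G.deg v) (bb : V → ℝ) :
    ∃ z : V → ℝ, ∀ z', G.Ffun bb z ≤ G.Ffun bb z' := by
  rcases isEmpty_or_nonempty V with hV | hV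
  · haveI : IsEmpty G.E := ⟨fun e => (G.mem_nonempty e).elim fun v _ => (hV.false v).elim⟩
    refine ⟨fun _ => 0, fun z' => le_of_eq ?_⟩
    simp [Ffun, dot, Finset.univ_eq_empty]
  · set d0 := Finset.univ.inf' Finset.univ_nonempty G.deg with hd0def
    have hd0 : 0 < d0 := (Finset.lt_inf'_iff _).2 fun v _ => hd v
    have hd0le : ∀ v, d0 ≤ G.deg v := fun v => Finset.inf'_le _ (Finset.mem_univ v)
    set S := ∑ v, (bb v) ^ 2 / d0 with hSdef
    have hS0 : 0 ≤ S := Finset.sum_nonneg fun v _ => div_nonneg (sq_nonneg _) hd0.le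
    set F0 := G.Ffun bb 0 with hF0def
    set R := Real.sqrt ((4 / d0) * (S + |F0| + 1)) with hRdef
    have hR0 : 0 ≤ R := Real.sqrt_nonneg _
    have hRsq : d0 / 4 * R ^ 2 = S + |F0| + 1 := by
      rw [hRdef, Real.sq_sqrt (by positivity)]
      field_simp
    set K := Set.univ.pi fun _ : V => Set.Icc (-R) R with hKdef
    have hKc : IsCompact K := isCompact_univ_pi fun _ => isCompact_Icc
    have hK0 : (0 : V → ℝ) ∈ K := by
      intro v _
      exact ⟨neg_nonpos.2 hR0, hR0⟩
    obtain ⟨z, hzK, hz⟩ := hKc.exists_isMinOn ⟨0, hK0⟩ (G.continuous_Ffun bb).continuousOn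
    refine ⟨z, fun z' => ?_⟩
    by_cases hz' : z' ∈ K
    · exact hz hz'
    · -- z' is far away, so `Ffun bb z'` is large
      have hkey : ∀ t c : ℝ, c * t ≤ d0 / 4 * t ^ 2 + c ^ 2 / d0 := by
        intro t c
        rw [← sub_nonneg]
        have : d0 / 4 * t ^ 2 + c ^ 2 / d0 - c * t = (d0 * t - 2 * c) ^ 2 / (4 * d0) := by
          field_simp; ring
        rw [this]; positivity
      obtain ⟨v, hv⟩ : ∃ v, ¬ z' v ∈ Set.Icc (-R) R := by
        by_contra hcon
        push_neg at hcon
        exact hz' fun v _ => hcon v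
      have hv2 : R ^ 2 < (z' v) ^ 2 := by
        rw [Set.mem_Icc] at hv
        push_neg at hv
        rcases le_or_gt (-R) (z' v) with h1 | h1
        · have := hv h1; nlinarith
        · nlinarith
      have h2 : ∀ u, d0 / 4 * (z' u) ^ 2 - (bb u) ^ 2 / d0 ≤
          G.deg u * z' u ^ 2 / 2 - bb u * z' u := by
        intro u
        have ha := hkey (z' u) (bb u)
        have hb : d0 * z' u ^ 2 ≤ G.deg u * z' u ^ 2 :=
          mul_le_mul_of_nonneg_right (hd0le u) (sq_nonneg _)
        linarith
      have h1 : ∑ u, (d0 / 4 * (z' u) ^ 2 - (bb u) ^ 2 / d0) ≤ G.Ffun bb z' := by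
        have hQ : 0 ≤ ∑ e, G.w e / 2 * G.sig e z' ^ 2 :=
          Finset.sum_nonneg fun e _ => mul_nonneg (by linarith [G.w_pos e]) (sq_nonneg _)
        have hEq : ∑ u, (G.deg u * z' u ^ 2 / 2 - bb u * z' u)
            = (∑ u, G.deg u * z' u ^ 2) / 2 - dot bb z' := by
          rw [Finset.sum_sub_distrib, Finset.sum_div]
          rfl
        have := Finset.sum_le_sum fun u (_ : u ∈ Finset.univ) => h2 u
        rw [hEq] at this
        rw [Ffun]
        linarith
      have h3 : d0 / 4 * (z' v) ^ 2 - S ≤ ∑ u, (d0 / 4 * (z' u) ^ 2 - (bb u) ^ 2 / d0) := by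
        rw [Finset.sum_sub_distrib, ← hSdef]
        have : d0 / 4 * (z' v) ^ 2 ≤ ∑ u, d0 / 4 * (z' u) ^ 2 :=
          Finset.single_le_sum (f := fun u => d0 / 4 * (z' u) ^ 2)
            (fun u _ => by positivity) (Finset.mem_univ v)
        linarith
      have hlt : F0 < G.Ffun bb z' := by
        have : S + |F0| + 1 - S ≤ d0 / 4 * (z' v) ^ 2 - S := by nlinarith
        have h5 := le_abs_self F0
        linarith
      exact (hz hK0).trans hlt.le

lemma sig_eventually (G : WHG V) (z h : V → ℝ) :
    ∀ᶠ t in nhdsWithin (0 : ℝ) (Set.Ioi 0), ∀ e,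
      G.sig e (z + t • h) = G.sig e z + t * G.meAux e z h := by
  rw [Filter.eventually_all]
  intro e
  have hub : ∀ᶠ t in nhdsWithin (0 : ℝ) (Set.Ioi 0), ∀ p ∈ G.pairsAux e,
      (z p.1 - z p.2) + t * (h p.1 - h p.2) ≤ G.sig e z + t * G.meAux e z h := by
    rw [Filter.eventually_all_finset]
    intro p hp
    by_cases hmax : z p.1 - z p.2 = G.sig e z
    · have hple : h p.1 - h p.2 ≤ G.meAux e z h := by
        rw [meAux]
        exact Finset.le_sup' (fun p : V × V => h p.1 - h p.2) (Finset.mem_filter.2 ⟨hp, hmax⟩)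
      filter_upwards [self_mem_nhdsWithin] with t ht
      have ht' : (0 : ℝ) ≤ t := le_of_lt ht
      have := mul_le_mul_of_nonneg_left hple ht'
      linarith
    · have hlt : z p.1 - z p.2 < G.sig e z := by
        refine lt_of_le_of_ne ?_ hmax
        rw [sig]
        exact Finset.le_sup' (fun p : V × V => z p.1 - z p.2) hp
      have hcont : Continuous fun t : ℝ =>
          (z p.1 - z p.2) + t * (h p.1 - h p.2) - (G.sig e z + t * G.meAux e z h) := by
        continuity
      have htend : Filter.Tendsto (fun t : ℝ =>
          (z p.1 - z p.2) + t * (h p.1 - h p.2) - (G.sig e z + t * G.meAux e z h))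
          (nhdsWithin (0 : ℝ) (Set.Ioi 0)) (nhds ((z p.1 - z p.2) - G.sig e z)) := by
        have := (hcont.tendsto 0).mono_left (nhdsWithin_le_nhds (s := Set.Ioi (0:ℝ)))
        simpa using this
      filter_upwards [htend.eventually_lt_const (by linarith : (z p.1 - z p.2) - G.sig e z < 0)]
        with t ht
      linarith
  obtain ⟨p₀, hp₀, hp₀e⟩ := Finset.exists_mem_eq_sup' (G.amax_nonempty e z)
    (fun p : V × V => h p.1 - h p.2)
  have hp₀p : p₀ ∈ G.pairsAux e := (Finset.mem_filter.mp hp₀).1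
  have hp₀s : z p₀.1 - z p₀.2 = G.sig e z := (Finset.mem_filter.mp hp₀).2
  filter_upwards [hub] with t ht
  have happ : ∀ p : V × V, (z + t • h) p.1 - (z + t • h) p.2
      = (z p.1 - z p.2) + t * (h p.1 - h p.2) := by
    intro p
    simp [Pi.add_apply, Pi.smul_apply, smul_eq_mul]
    ring
  apply le_antisymm
  · rw [sig]
    apply Finset.sup'_le
    intro p hp
    rw [happ p]
    exact ht p hp
  · have hle : (z + t • h) p₀.1 - (z + t • h) p₀.2 ≤ G.sig e (z + t • h) := by
      rw [sig]
      exact Finset.le_sup' (fun p : V × V => (z + t • h) p.1 - (z + t • h) p.2) hp₀p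
    rw [happ p₀, hp₀s, ← hp₀e] at hle
    exact hle

lemma dirderiv_nonneg (G : WHG V) (bb z : V → ℝ)
    (hg : ∀ z', G.Ffun bb z ≤ G.Ffun bb z') (h : V → ℝ) :
    0 ≤ (∑ v, (G.deg v * z v - bb v) * h v) + ∑ e, G.w e * G.sig e z * G.meAux e z h := by
  set A := (∑ v, (G.deg v * z v - bb v) * h v) + ∑ e, G.w e * G.sig e z * G.meAux e z h
    with hAdef
  set B := (∑ v, G.deg v * h v ^ 2) / 2 + ∑ e, G.w e / 2 * (G.meAux e z h) ^ 2 with hBdef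
  have hexp : ∀ᶠ t in nhdsWithin (0 : ℝ) (Set.Ioi 0), 0 ≤ A + t * B := by
    filter_upwards [G.sig_eventually z h, self_mem_nhdsWithin] with t hts ht
    have ht0 : (0 : ℝ) < t := ht
    have hF : G.Ffun bb (z + t • h) = G.Ffun bb z + t * A + t ^ 2 * B := by
      rw [Ffun, Ffun, dot, dot]
      have e1 : ∑ v, G.deg v * (z + t • h) v ^ 2
          = ∑ v, (G.deg v * z v ^ 2 + t * (2 * (G.deg v * z v * h v))
            + t ^ 2 * (G.deg v * h v ^ 2)) := by
        refine Finset.sum_congr rfl fun v _ => ?_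
        simp only [Pi.add_apply, Pi.smul_apply, smul_eq_mul]
        ring
      have e2 : ∑ v, bb v * (z + t • h) v = ∑ v, (bb v * z v + t * (bb v * h v)) := by
        refine Finset.sum_congr rfl fun v _ => ?_
        simp only [Pi.add_apply, Pi.smul_apply, smul_eq_mul]
        ring
      have e3 : ∑ e, G.w e / 2 * G.sig e (z + t • h) ^ 2
          = ∑ e, (G.w e / 2 * G.sig e z ^ 2 + t * (G.w e * G.sig e z * G.meAux e z h)
            + t ^ 2 * (G.w e / 2 * (G.meAux e z h) ^ 2)) := by
        refine Finset.sum_congr rfl fun e _ => ?_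
        rw [hts e]
        ring
      have s1 : ∑ v, (G.deg v * z v ^ 2 + t * (2 * (G.deg v * z v * h v))
            + t ^ 2 * (G.deg v * h v ^ 2))
          = (∑ v, G.deg v * z v ^ 2) + t * (2 * ∑ v, G.deg v * z v * h v)
            + t ^ 2 * (∑ v, G.deg v * h v ^ 2) := by
        rw [Finset.sum_add_distrib, Finset.sum_add_distrib, ← Finset.mul_sum, ← Finset.mul_sum,
          ← Finset.mul_sum]
      have s2 : ∑ v, (bb v * z v + t * (bb v * h v))
          = (∑ v, bb v * z v) + t * ∑ v, bb v * h v := by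
        rw [Finset.sum_add_distrib, ← Finset.mul_sum]
      have s3 : ∑ e, (G.w e / 2 * G.sig e z ^ 2 + t * (G.w e * G.sig e z * G.meAux e z h)
            + t ^ 2 * (G.w e / 2 * (G.meAux e z h) ^ 2))
          = (∑ e, G.w e / 2 * G.sig e z ^ 2) + t * (∑ e, G.w e * G.sig e z * G.meAux e z h)
            + t ^ 2 * ∑ e, G.w e / 2 * (G.meAux e z h) ^ 2 := by
        rw [Finset.sum_add_distrib, Finset.sum_add_distrib, ← Finset.mul_sum, ← Finset.mul_sum]
      have sA : ∑ v, (G.deg v * z v - bb v) * h v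
          = (∑ v, G.deg v * z v * h v) - ∑ v, bb v * h v := by
        rw [← Finset.sum_sub_distrib]
        exact Finset.sum_congr rfl fun v _ => by ring
      rw [e1, s1, e2, s2, e3, s3, hAdef, hBdef, sA]
      ring
    have hge := hg (z + t • h)
    rw [hF] at hge
    nlinarith
  have htendA : Filter.Tendsto (fun t : ℝ => A + t * B)
      (nhdsWithin (0 : ℝ) (Set.Ioi 0)) (nhds A) := by
    have hcont : Continuous fun t : ℝ => A + t * B := by continuity
    have := (hcont.tendsto 0).mono_left (nhdsWithin_le_nhds (s := Set.Ioi (0:ℝ)))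
    simpa using this
  exact ge_of_tendsto htendA hexp

lemma exists_selection (G : WHG V) (bb z : V → ℝ)
    (hg : ∀ z', G.Ffun bb z ≤ G.Ffun bb z') :
    ∃ c : G.E → V → ℝ,
      (∀ e, c e ∈ convexHull ℝ (pvec '' ((G.amax e z : Set (V × V))))) ∧
      (fun v => G.deg v * z v - bb v) + ∑ e, (G.w e * G.sig e z) • c e = 0 := by
  classical
  set v₀ : V → ℝ := fun v => G.deg v * z v - bb v with hv₀
  set T : (G.E → V → ℝ) → (V → ℝ) := fun c => v₀ + ∑ e, (G.w e * G.sig e z) • c e with hT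
  set KK : Set (G.E → V → ℝ) :=
    Set.univ.pi fun e => convexHull ℝ (pvec '' ((G.amax e z : Set (V × V)))) with hKK
  have hC0 : (0 : V → ℝ) ∈ T '' KK := by
    by_contra h0
    -- convexity of the image
    have hCconv : Convex ℝ (T '' KK) := by
      rintro x ⟨c₁, hc₁, rfl⟩ y ⟨c₂, hc₂, rfl⟩ a b ha hb hab
      refine ⟨fun e => a • c₁ e + b • c₂ e, fun e _ => ?_, ?_⟩
      · exact (convex_convexHull ℝ _) (hc₁ e (Set.mem_univ e)) (hc₂ e (Set.mem_univ e)) ha hb hab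
      · funext v
        simp only [hT, Pi.add_apply, Pi.smul_apply, Finset.sum_apply, smul_eq_mul]
        have hs : ∑ e, G.w e * G.sig e z * (a * c₁ e v + b * c₂ e v)
            = a * ∑ e, G.w e * G.sig e z * c₁ e v + b * ∑ e, G.w e * G.sig e z * c₂ e v := by
          rw [Finset.mul_sum, Finset.mul_sum, ← Finset.sum_add_distrib]
          exact Finset.sum_congr rfl fun e _ => by ring
        rw [hs]
        linear_combination (v₀ v) * hab.symm
    -- closedness of the image
    have hKKc : IsCompact KK := isCompact_univ_pi fun e =>
      ((Set.toFinite _).image pvec).isCompact_convexHull ℝ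
    have hTcont : Continuous T := by
      apply continuous_const.add
      exact continuous_finset_sum _ fun e _ => by fun_prop
    have hCcl : IsClosed (T '' KK) := (hKKc.image hTcont).isClosed
    obtain ⟨f, u, hfC, hu0⟩ := geometric_hahn_banach_closed_point hCconv hCcl h0
    rw [map_zero] at hu0
    set h : V → ℝ := fun v => f (Pi.single v 1) with hh
    have hf : ∀ a : V → ℝ, f a = ∑ v, a v * h v := by
      intro a
      conv_lhs => rw [pi_eq_sum_univ a]
      rw [map_sum]
      refine Finset.sum_congr rfl fun v _ => ?_
      rw [map_smul, smul_eq_mul]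
      congr 1
      have hsingle : (fun j => if v = j then (1 : ℝ) else 0) = Pi.single v 1 := by
        funext j
        simp [Pi.single_apply, eq_comm]
      rw [hsingle]
    choose p hp hpe using fun e => Finset.exists_mem_eq_sup' (G.amax_nonempty e z)
      (fun p : V × V => h p.1 - h p.2)
    set c : G.E → V → ℝ := fun e => pvec (p e) with hc
    have hcK : c ∈ KK := by
      intro e _
      exact subset_convexHull ℝ _ ⟨p e, by exact_mod_cast hp e, rfl⟩
    have hTc : f (T c) = (∑ v, v₀ v * h v) + ∑ e, G.w e * G.sig e z * G.meAux e z h := by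
      simp only [hT, map_add, map_sum, map_smul, smul_eq_mul]
      rw [hf v₀]
      congr 1
      refine Finset.sum_congr rfl fun e _ => ?_
      have hfc : f (c e) = h (p e).1 - h (p e).2 := by
        rw [hc]
        simp only [pvec, map_sub, hh]
      rw [hfc]
      have : G.meAux e z h = h (p e).1 - h (p e).2 := hpe e
      rw [this]
    have h1 : 0 ≤ f (T c) := by
      rw [hTc]
      exact G.dirderiv_nonneg bb z hg h
    have h2 : f (T c) < u := hfC _ ⟨c, hcK, rfl⟩
    linarith
  obtain ⟨c, hcK, hceq⟩ := hC0
  exact ⟨c, fun e => hcK e (Set.mem_univ e), hceq⟩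

end Maximality

/-- the range of `I + 𝓛_G` is all of `ℝ^V` (maximality of the
monotone operator `𝓛_G`). -/
theorem range_id_add_nLap {V : Type} [Fintype V] [DecidableEq V] (G : WHG V)
    (hd : ∀ v, 0 < G.deg v) (b : V → ℝ) :
    ∃ x : V → ℝ, ∃ y ∈ G.nLap x, x + y = b := by
  obtain ⟨z, hg⟩ := G.exists_global_min hd b
  obtain ⟨c, hcK, hceq⟩ := G.exists_selection b z hg
  set x : V → ℝ := fun v => G.deg v * z v with hx
  have hDinv : G.Dinv x = z := by
    funext v
    simp only [Dinv, hx]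
    rw [mul_comm, mul_div_assoc, div_self (hd v).ne', mul_one]
  have hbase : ∀ e, c e ∈ G.base e := by
    intro e
    have hsub : pvec '' ((G.amax e z : Set (V × V))) ⊆
        {b' : V → ℝ | ∃ u ∈ G.mem e, ∃ w' ∈ G.mem e, b' = Pi.single u 1 - Pi.single w' 1} := by
      rintro _ ⟨p, hp, rfl⟩
      have hpp : p ∈ G.pairsAux e :=
        (Finset.mem_filter.mp (by exact_mod_cast hp : p ∈ G.amax e z)).1
      rw [pairsAux, Finset.mem_product] at hpp
      exact ⟨p.1, hpp.1, p.2, hpp.2, rfl⟩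
    exact convexHull_mono hsub (hcK e)
  have hdotc : ∀ e, dot (c e) z = G.sig e z := by
    intro e
    have hconv : Convex ℝ {a : V → ℝ | dot a z = G.sig e z} := by
      have heq : {a : V → ℝ | dot a z = G.sig e z}
          = {a : V → ℝ | dot a z ≤ G.sig e z} ∩ {a : V → ℝ | G.sig e z ≤ dot a z} := by
        ext a
        simp only [Set.mem_setOf_eq, Set.mem_inter_iff]
        constructor
        · intro h1; exact ⟨le_of_eq h1, ge_of_eq h1⟩
        · rintro ⟨h1, h2⟩; exact le_antisymm h1 h2
      rw [heq]
      exact (convex_halfSpace_le (isLinearMap_dot z) _).inter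
        (convex_halfSpace_ge (isLinearMap_dot z) _)
    have hsub : pvec '' ((G.amax e z : Set (V × V))) ⊆ {a : V → ℝ | dot a z = G.sig e z} := by
      rintro _ ⟨p, hp, rfl⟩
      have := (Finset.mem_filter.mp (by exact_mod_cast hp : p ∈ G.amax e z)).2
      simpa [dot_pvec] using this
    exact convexHull_min hsub hconv (hcK e)
  refine ⟨x, ∑ e, (G.w e * dot (c e) (G.Dinv x)) • c e,
    ⟨c, fun e => ⟨hbase e, ?_⟩, rfl⟩, ?_⟩
  · intro b' hb'
    rw [hDinv]
    exact (G.dot_le_sig e z hb').trans_eq (hdotc e).symm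
  · have hsum : ∑ e, (G.w e * dot (c e) (G.Dinv x)) • c e = ∑ e, (G.w e * G.sig e z) • c e := by
      rw [hDinv]
      exact Finset.sum_congr rfl fun e _ => by rw [hdotc e]
    rw [hsum]
    funext v
    have hv := congrFun hceq v
    simp only [Pi.add_apply, Pi.zero_apply] at hv
    simp only [Pi.add_apply, hx]
    linarith [hv]

end WHG
end

section
/- Let H be a weighted graph on a finite vertex set V with positive degrees, let s ∈ ℝ^V with ∑_{v ∈ V} s(v) = 1, and define f(Δ) = sᵀ D⁻¹ (e^{−Δ𝓛} s − π). Let Δ ≥ 0 with f(Δ) > 0, set μ = D⁻¹ e^{−(Δ/2)𝓛} s, and let κ = min { φ_H(S) : S ∈ sweep(μ), ∅ ⊊ S ⊊ V } be the minimum conductance of a nontrivial sweep set of μ. Then the derivative of Δ ↦ log f(Δ) at Δ satisfies −(d/dΔ) log f(Δ) ≥ κ²/2. -/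
set_option linter.unusedSectionVars false
set_option linter.unusedVariables false
set_option maxHeartbeats 1600000

open Finset
open scoped Classical

namespace GraphHeat

variable {V : Type} [Fintype V] [DecidableEq V]

/-- Degree in a weighted graph given by its adjacency matrix. -/
noncomputable def deg (A : Matrix V V ℝ) (v : V) : ℝ := ∑ u, A v u

/-- Normalized Laplacian `𝓛 = I − A D⁻¹`. -/
noncomputable def nlap (A : Matrix V V ℝ) : Matrix V V ℝ :=
  1 - A * Matrix.diagonal (fun v => (deg A v)⁻¹)

/-- The heat semigroup `e^{−Δ𝓛} s`. -/
noncomputable def heat (A : Matrix V V ℝ) (Δ : ℝ) (s : V → ℝ) : V → ℝ :=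
  (NormedSpace.exp (-(Δ • nlap A))).mulVec s

/-- Stationary vector `π`. -/
noncomputable def piV (A : Matrix V V ℝ) : V → ℝ := fun v => deg A v / ∑ u, deg A u

section Aux

open scoped Matrix
open MeasureTheory NormedSpace

lemma exp_linear_tsum {E : Type} [NormedAddCommGroup E] [NormedSpace ℝ E]
    (lm : Matrix V V ℝ →ₗ[ℝ] E) (M : Matrix V V ℝ) :
    lm (NormedSpace.exp M) = ∑' n : ℕ, ((Nat.factorial n : ℝ))⁻¹ • lm (M ^ n) := by
  letI : SeminormedRing (Matrix V V ℝ) := Matrix.linftyOpSemiNormedRing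
  letI : NormedRing (Matrix V V ℝ) := Matrix.linftyOpNormedRing
  letI : NormedAlgebra ℝ (Matrix V V ℝ) := Matrix.linftyOpNormedAlgebra
  have hsum : Summable (fun n : ℕ => ((Nat.factorial n : ℝ))⁻¹ • M ^ n) := expSeries_summable' M
  have hc : Continuous lm := lm.continuous_of_finiteDimensional
  have h2 : lm (∑' n : ℕ, ((Nat.factorial n : ℝ))⁻¹ • M ^ n)
      = ∑' n : ℕ, lm (((Nat.factorial n : ℝ))⁻¹ • M ^ n) :=
    (LinearMap.toContinuousLinearMap lm).map_tsum hsum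
  rw [exp_eq_tsum (𝕂 := ℝ)]
  simpa [_root_.map_smul] using h2

/-- `N ↦ N.mulVec x` as a linear map. -/
noncomputable def mvLM (x : V → ℝ) : Matrix V V ℝ →ₗ[ℝ] (V → ℝ) where
  toFun N := N.mulVec x
  map_add' a b := Matrix.add_mulVec a b x
  map_smul' c N := Matrix.smul_mulVec c N x

lemma exp_mulVec_fixed (M : Matrix V V ℝ) (x : V → ℝ) (h : M.mulVec x = 0) :
    (NormedSpace.exp M).mulVec x = x := by
  have := exp_linear_tsum (mvLM x) M
  simp only [mvLM, LinearMap.coe_mk, AddHom.coe_mk] at this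
  rw [this, tsum_eq_single 0]
  · simp
  · intro n hn
    obtain ⟨k, rfl⟩ := Nat.exists_eq_succ_of_ne_zero hn
    rw [pow_succ, ← Matrix.mulVec_mulVec, h, Matrix.mulVec_zero, smul_zero]

lemma sum_exp_mulVec (M : Matrix V V ℝ) (h : ∀ u, ∑ v, M v u = 0) (x : V → ℝ) :
    ∑ v, (NormedSpace.exp M).mulVec x v = ∑ v, x v := by
  classical
  let sumLM : (V → ℝ) →ₗ[ℝ] ℝ :=
    { toFun := fun y => ∑ v, y v
      map_add' := fun a b => by simp [Finset.sum_add_distrib]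
      map_smul' := fun c y => by simp [Finset.mul_sum] }
  have := exp_linear_tsum (sumLM.comp (mvLM x)) M
  simp only [LinearMap.coe_comp, Function.comp_apply, mvLM, LinearMap.coe_mk,
    AddHom.coe_mk, sumLM] at this
  rw [this, tsum_eq_single 0]
  · simp
  · intro n hn
    obtain ⟨k, rfl⟩ := Nat.exists_eq_succ_of_ne_zero hn
    have hz : ∑ v, (M ^ (k+1)).mulVec x v = 0 := by
      rw [pow_succ', ← Matrix.mulVec_mulVec]
      set y := (M ^ k).mulVec x
      calc ∑ v, M.mulVec y v = ∑ u, (∑ v, M v u) * y u := by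
            simp only [Matrix.mulVec, dotProduct]
            rw [Finset.sum_comm]
            simp [Finset.sum_mul]
        _ = 0 := by simp [h]
    rw [hz, smul_zero]

lemma dot_sym_of (W N : Matrix V V ℝ) (h : W * N = Nᵀ * W) (x y : V → ℝ) :
    x ⬝ᵥ W.mulVec (N.mulVec y) = N.mulVec x ⬝ᵥ W.mulVec y := by
  rw [Matrix.mulVec_mulVec, h, ← Matrix.mulVec_mulVec, Matrix.dotProduct_mulVec,
    Matrix.vecMul_transpose]

lemma pow_sym {W M : Matrix V V ℝ} (h : W * M = Mᵀ * W) (n : ℕ) :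
    W * M ^ n = (M ^ n)ᵀ * W := by
  induction n with
  | zero => simp
  | succ k ih =>
    rw [pow_succ', ← mul_assoc, h, mul_assoc, ih, ← mul_assoc, ← Matrix.transpose_mul,
      ← pow_succ']
    rw [pow_succ]

lemma dot_sym_exp (W M : Matrix V V ℝ) (h : W * M = Mᵀ * W) (x y : V → ℝ) :
    x ⬝ᵥ W.mulVec ((NormedSpace.exp M).mulVec y)
      = (NormedSpace.exp M).mulVec x ⬝ᵥ W.mulVec y := by
  classical
  let lm1 : Matrix V V ℝ →ₗ[ℝ] ℝ :=
    { toFun := fun N => x ⬝ᵥ W.mulVec (N.mulVec y)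
      map_add' := fun a b => by
        simp [Matrix.add_mulVec, Matrix.mulVec_add, dotProduct_add]
      map_smul' := fun c N => by
        simp [Matrix.smul_mulVec, Matrix.mulVec_smul, dotProduct_smul] }
  let lm2 : Matrix V V ℝ →ₗ[ℝ] ℝ :=
    { toFun := fun N => N.mulVec x ⬝ᵥ W.mulVec y
      map_add' := fun a b => by simp [Matrix.add_mulVec, add_dotProduct]
      map_smul' := fun c N => by simp [Matrix.smul_mulVec, smul_dotProduct] }
  have h1 := exp_linear_tsum lm1 M
  have h2 := exp_linear_tsum lm2 M
  simp only [lm1, lm2, LinearMap.coe_mk, AddHom.coe_mk] at h1 h2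
  rw [h1, h2]
  exact tsum_congr fun n => by rw [dot_sym_of W (M ^ n) (pow_sym h n) x y]

lemma exp_mulVec_comm {M N : Matrix V V ℝ} (h : Commute M N) (x : V → ℝ) :
    (NormedSpace.exp M).mulVec (N.mulVec x) = N.mulVec ((NormedSpace.exp M).mulVec x) := by
  classical
  have h1 := exp_linear_tsum (mvLM (N.mulVec x)) M
  have h2 := exp_linear_tsum ((Matrix.mulVecLin N).comp (mvLM x)) M
  simp only [mvLM, LinearMap.coe_mk, AddHom.coe_mk, LinearMap.coe_comp,
    Function.comp_apply, Matrix.mulVecLin_apply] at h1 h2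
  rw [h1, h2]
  exact tsum_congr fun n => by
    rw [Matrix.mulVec_mulVec, Matrix.mulVec_mulVec, (h.pow_left n).eq]


lemma vol_Ioo_inter_Ici (a b : ℝ) (hb : 0 ≤ b) :
    MeasureTheory.volume (Set.Ioo 0 a ∩ Set.Ici b) = ENNReal.ofReal (a - b) := by
  rcases eq_or_lt_of_le hb with h0 | h0
  · have : Set.Ioo 0 a ∩ Set.Ici b = Set.Ioo 0 a := by
      apply Set.inter_eq_left.2
      intro t ht
      exact le_trans h0.ge ht.1.le
    rw [this, Real.volume_Ioo, sub_zero, ← h0, sub_zero]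
  · have : Set.Ioo 0 a ∩ Set.Ici b = Set.Ico b a := by
      ext t
      constructor
      · rintro ⟨⟨_, h2⟩, h3⟩; exact ⟨h3, h2⟩
      · rintro ⟨h1, h2⟩; exact ⟨⟨lt_of_lt_of_le h0 h1, h2⟩, h1⟩
    rw [this, Real.volume_Ico]

lemma integral_ind_Ioo (a c : ℝ) (ha : 0 ≤ a) :
    ∫ t in Set.Ioi (0:ℝ), Set.indicator (Set.Ioo 0 a) (fun _ => c) t = c * a := by
  rw [MeasureTheory.setIntegral_indicator measurableSet_Ioo]
  have : Set.Ioi (0:ℝ) ∩ Set.Ioo 0 a = Set.Ioo 0 a := by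
    apply Set.inter_eq_right.2; intro t ht; exact ht.1
  rw [this, MeasureTheory.setIntegral_const, measureReal_def, Real.volume_Ioo, sub_zero, smul_eq_mul,
    ENNReal.toReal_ofReal ha, mul_comm]

lemma integral_ind_pair (a b c : ℝ) (hb : 0 ≤ b) :
    ∫ t in Set.Ioi (0:ℝ), Set.indicator (Set.Ioo 0 a ∩ Set.Ici b) (fun _ => c) t
      = c * max (a - b) 0 := by
  rw [MeasureTheory.setIntegral_indicator (measurableSet_Ioo.inter measurableSet_Ici)]
  have : Set.Ioi (0:ℝ) ∩ (Set.Ioo 0 a ∩ Set.Ici b) = Set.Ioo 0 a ∩ Set.Ici b := by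
    apply Set.inter_eq_right.2; intro t ht; exact ht.1.1
  rw [this, MeasureTheory.setIntegral_const, measureReal_def, vol_Ioo_inter_Ici a b hb, smul_eq_mul,
    ENNReal.toReal_ofReal', mul_comm]

lemma integrable_ind_Ioo (a c : ℝ) :
    IntegrableOn (Set.indicator (Set.Ioo 0 a) (fun _ => c)) (Set.Ioi (0:ℝ)) := by
  apply MeasureTheory.Integrable.integrableOn
  rw [MeasureTheory.integrable_indicator_iff measurableSet_Ioo]
  exact (MeasureTheory.integrableOn_const_iff enorm_ne_top).2 (Or.inr measure_Ioo_lt_top)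

lemma integrable_ind_pair (a b c : ℝ) :
    IntegrableOn (Set.indicator (Set.Ioo 0 a ∩ Set.Ici b) (fun _ => c)) (Set.Ioi (0:ℝ)) := by
  apply MeasureTheory.Integrable.integrableOn
  rw [MeasureTheory.integrable_indicator_iff (measurableSet_Ioo.inter measurableSet_Ici)]
  apply (MeasureTheory.integrableOn_const_iff enorm_ne_top).2
  right
  exact lt_of_le_of_lt (measure_mono Set.inter_subset_left) measure_Ioo_lt_top


lemma ind_sum_eq (d : V → ℝ) (ψ : V → ℝ) (t : ℝ) (ht : 0 < t) :
    ∑ v, Set.indicator (Set.Ioo 0 (ψ v ^ 2)) (fun _ => d v) t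
      = ∑ v ∈ univ.filter (fun v => t < ψ v ^ 2), d v := by
  rw [Finset.sum_filter]
  refine Finset.sum_congr rfl fun v _ => ?_
  by_cases h : t < ψ v ^ 2 <;> simp [Set.indicator_apply, Set.mem_Ioo, ht, h]

lemma ind_pair_sum_eq (A : Matrix V V ℝ) (ψ : V → ℝ) (t : ℝ) (ht : 0 < t) :
    (∑ u, ∑ v, Set.indicator (Set.Ioo 0 (ψ u ^ 2) ∩ Set.Ici (ψ v ^ 2)) (fun _ => A u v) t)
      = ∑ u ∈ univ.filter (fun v => t < ψ v ^ 2),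
          ∑ v ∈ (univ.filter (fun v => t < ψ v ^ 2))ᶜ, A u v := by
  rw [Finset.compl_filter, Finset.sum_filter]
  refine Finset.sum_congr rfl fun u _ => ?_
  by_cases hu : t < ψ u ^ 2
  · simp only [hu, if_true]
    rw [Finset.sum_filter]
    refine Finset.sum_congr rfl fun v _ => ?_
    by_cases hv : t < ψ v ^ 2
    · simp [Set.indicator_apply, Set.mem_Ioo, Set.mem_Ici, ht, hu, hv, not_lt.2 hv.le,
        not_le.2 hv]
    · simp [Set.indicator_apply, Set.mem_Ioo, Set.mem_Ici, ht, hu, hv, not_lt.1 hv]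
  · simp only [hu, if_false]
    refine Finset.sum_eq_zero fun v _ => ?_
    simp [Set.indicator_apply, Set.mem_Ioo, Set.mem_Ici, ht, hu]

lemma coarea (A : Matrix V V ℝ) (d : V → ℝ) (κ : ℝ) (ψ : V → ℝ)
    (hcut : ∀ t : ℝ, 0 < t →
      κ * ∑ v ∈ univ.filter (fun v => t < ψ v ^ 2), d v ≤
        ∑ u ∈ univ.filter (fun v => t < ψ v ^ 2),
          ∑ v ∈ (univ.filter (fun v => t < ψ v ^ 2))ᶜ, A u v) :
    κ * ∑ v, d v * ψ v ^ 2 ≤ ∑ u, ∑ v, A u v * max (ψ u ^ 2 - ψ v ^ 2) 0 := by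
  classical
  have hGint : IntegrableOn
      (fun t : ℝ => κ * ∑ v, Set.indicator (Set.Ioo 0 (ψ v ^ 2)) (fun _ => d v) t)
      (Set.Ioi (0:ℝ)) :=
    (MeasureTheory.integrable_finset_sum _ (fun v _ => integrable_ind_Ioo _ _)).const_mul κ
  have hFint : IntegrableOn
      (fun t : ℝ => ∑ u, ∑ v,
        Set.indicator (Set.Ioo 0 (ψ u ^ 2) ∩ Set.Ici (ψ v ^ 2)) (fun _ => A u v) t)
      (Set.Ioi (0:ℝ)) :=
    MeasureTheory.integrable_finset_sum _ (fun u _ =>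
      MeasureTheory.integrable_finset_sum _ (fun v _ => integrable_ind_pair _ _ _))
  have hmono : ∀ t ∈ Set.Ioi (0:ℝ),
      κ * ∑ v, Set.indicator (Set.Ioo 0 (ψ v ^ 2)) (fun _ => d v) t ≤
      ∑ u, ∑ v, Set.indicator (Set.Ioo 0 (ψ u ^ 2) ∩ Set.Ici (ψ v ^ 2)) (fun _ => A u v) t := by
    intro t ht
    rw [Set.mem_Ioi] at ht
    rw [ind_sum_eq d ψ t ht, ind_pair_sum_eq A ψ t ht]
    exact hcut t ht
  have key := MeasureTheory.setIntegral_mono_on hGint hFint measurableSet_Ioi hmono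
  have hGval : (∫ t in Set.Ioi (0:ℝ),
      κ * ∑ v, Set.indicator (Set.Ioo 0 (ψ v ^ 2)) (fun _ => d v) t)
      = κ * ∑ v, d v * ψ v ^ 2 := by
    rw [MeasureTheory.integral_const_mul]
    congr 1
    rw [MeasureTheory.integral_finset_sum _ (fun v _ => integrable_ind_Ioo _ _)]
    exact Finset.sum_congr rfl fun v _ => integral_ind_Ioo _ _ (sq_nonneg _)
  have hFval : (∫ t in Set.Ioi (0:ℝ), ∑ u, ∑ v,
      Set.indicator (Set.Ioo 0 (ψ u ^ 2) ∩ Set.Ici (ψ v ^ 2)) (fun _ => A u v) t)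
      = ∑ u, ∑ v, A u v * max (ψ u ^ 2 - ψ v ^ 2) 0 := by
    refine (MeasureTheory.integral_finset_sum _ (fun u _ =>
      MeasureTheory.integrable_finset_sum _ (fun v _ => integrable_ind_pair _ _ _))).trans ?_
    refine Finset.sum_congr rfl fun u _ => ?_
    refine (MeasureTheory.integral_finset_sum _ (fun v _ => integrable_ind_pair _ _ _)).trans ?_
    exact Finset.sum_congr rfl fun v _ => integral_ind_pair _ _ _ (sq_nonneg _)
  rw [hGval, hFval] at key
  exact key

lemma side (A : Matrix V V ℝ) (hsym : A.IsSymm) (hnn : ∀ u v, 0 ≤ A u v)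
    (d : V → ℝ) (hrow : ∀ u, ∑ v, A u v = d u) (κ : ℝ) (hκ0 : 0 ≤ κ)
    (ψ : V → ℝ) (hψ : ∀ v, 0 ≤ ψ v)
    (hcut : ∀ t : ℝ, 0 < t →
      κ * ∑ v ∈ univ.filter (fun v => t < ψ v ^ 2), d v ≤
        ∑ u ∈ univ.filter (fun v => t < ψ v ^ 2),
          ∑ v ∈ (univ.filter (fun v => t < ψ v ^ 2))ᶜ, A u v) :
    κ ^ 2 * ∑ v, d v * ψ v ^ 2 ≤ ∑ u, ∑ v, A u v * (ψ u - ψ v) ^ 2 := by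
  classical
  have hAsymm : ∀ u v, A v u = A u v := fun u v => by
    have := congrFun (congrFun hsym u) v
    simpa [Matrix.transpose_apply] using this
  set Q := ∑ v, d v * ψ v ^ 2 with hQdef
  set E := ∑ u, ∑ v, A u v * (ψ u - ψ v) ^ 2 with hEdef
  have hEnn : 0 ≤ E := Finset.sum_nonneg fun u _ => Finset.sum_nonneg fun v _ =>
    mul_nonneg (hnn u v) (sq_nonneg _)
  have hQnn : 0 ≤ Q := Finset.sum_nonneg fun v _ => by
    have : 0 ≤ d v := by rw [← hrow v]; exact Finset.sum_nonneg fun u _ => hnn v u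
    exact mul_nonneg this (sq_nonneg _)
  -- coarea
  have hT := coarea A d κ ψ hcut
  set T := ∑ u, ∑ v, A u v * max (ψ u ^ 2 - ψ v ^ 2) 0 with hTdef
  -- rewrite T as a product
  have hTprod : T = ∑ p : V × V,
      (Real.sqrt (A p.1 p.2) * max (ψ p.1 - ψ p.2) 0) *
      (Real.sqrt (A p.1 p.2) * ((ψ p.1 + ψ p.2) * (if ψ p.2 < ψ p.1 then 1 else 0))) := by
    rw [hTdef, Fintype.sum_prod_type]
    refine Finset.sum_congr rfl fun u _ => Finset.sum_congr rfl fun v _ => ?_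
    by_cases h : ψ v < ψ u
    · have h1 : max (ψ u ^ 2 - ψ v ^ 2) 0 = ψ u ^ 2 - ψ v ^ 2 := by
        apply max_eq_left; nlinarith [hψ u, hψ v]
      have h2 : max (ψ u - ψ v) 0 = ψ u - ψ v := max_eq_left (by linarith)
      rw [h1, h2, if_pos h]
      have hs := Real.mul_self_sqrt (hnn u v)
      nlinarith [hs]
    · have h1 : max (ψ u ^ 2 - ψ v ^ 2) 0 = 0 := by
        apply max_eq_right; nlinarith [hψ u, hψ v, not_lt.1 h]
      have h2 : max (ψ u - ψ v) 0 = 0 := max_eq_right (by linarith [not_lt.1 h])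
      rw [h1, h2, if_neg h]
      ring
  -- Cauchy–Schwarz
  have hCS := Finset.sum_mul_sq_le_sq_mul_sq Finset.univ
      (fun p : V × V => Real.sqrt (A p.1 p.2) * max (ψ p.1 - ψ p.2) 0)
      (fun p : V × V => Real.sqrt (A p.1 p.2) *
        ((ψ p.1 + ψ p.2) * (if ψ p.2 < ψ p.1 then 1 else 0)))
  -- first factor equals E/2
  have hsq : ∀ u v : V, (Real.sqrt (A u v) * max (ψ u - ψ v) 0) ^ 2
      = A u v * max (ψ u - ψ v) 0 ^ 2 := fun u v => by
    rw [mul_pow, Real.sq_sqrt (hnn u v)]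
  have hX : ∑ p : V × V, (Real.sqrt (A p.1 p.2) * max (ψ p.1 - ψ p.2) 0) ^ 2 = E / 2 := by
    rw [Fintype.sum_prod_type]
    have swap : ∑ u, ∑ v, A u v * max (ψ v - ψ u) 0 ^ 2
        = ∑ u, ∑ v, A u v * max (ψ u - ψ v) 0 ^ 2 := by
      rw [Finset.sum_comm]
      exact Finset.sum_congr rfl fun u _ => Finset.sum_congr rfl fun v _ => by
        rw [hAsymm u v]
    have split : ∀ u v : V, A u v * max (ψ u - ψ v) 0 ^ 2 + A u v * max (ψ v - ψ u) 0 ^ 2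
        = A u v * (ψ u - ψ v) ^ 2 := fun u v => by
      rcases le_total (ψ u) (ψ v) with h | h
      · rw [max_eq_right (by linarith), max_eq_left (by linarith)]; ring_nf
      · rw [max_eq_left (by linarith), max_eq_right (by linarith)]; ring_nf
    have : (∑ u, ∑ v, A u v * max (ψ u - ψ v) 0 ^ 2)
        + (∑ u, ∑ v, A u v * max (ψ v - ψ u) 0 ^ 2) = E := by
      rw [hEdef, ← Finset.sum_add_distrib]
      refine Finset.sum_congr rfl fun u _ => ?_
      rw [← Finset.sum_add_distrib]
      exact Finset.sum_congr rfl fun v _ => split u v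
    rw [swap] at this
    calc ∑ u, ∑ v, (Real.sqrt (A u v) * max (ψ u - ψ v) 0) ^ 2
        = ∑ u, ∑ v, A u v * max (ψ u - ψ v) 0 ^ 2 :=
          Finset.sum_congr rfl fun u _ => Finset.sum_congr rfl fun v _ => hsq u v
      _ = E / 2 := by linarith
  -- second factor is at most 2 Q
  have hY : ∑ p : V × V, (Real.sqrt (A p.1 p.2) *
      ((ψ p.1 + ψ p.2) * (if ψ p.2 < ψ p.1 then 1 else 0))) ^ 2 ≤ 2 * Q := by
    rw [Fintype.sum_prod_type]
    have step1 : ∀ u v : V, (Real.sqrt (A u v) *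
        ((ψ u + ψ v) * (if ψ v < ψ u then 1 else 0))) ^ 2
        ≤ 2 * (A u v * ψ u ^ 2 * (if ψ v < ψ u then 1 else 0)
             + A u v * ψ v ^ 2 * (if ψ v < ψ u then 1 else 0)) := fun u v => by
      by_cases h : ψ v < ψ u
      · simp only [if_pos h]
        rw [mul_pow, Real.sq_sqrt (hnn u v)]
        have : (ψ u + ψ v) ^ 2 ≤ 2 * (ψ u ^2 + ψ v ^2) := by nlinarith [sq_nonneg (ψ u - ψ v)]
        nlinarith [hnn u v, this]
      · simp [if_neg h]
    have step2 : (∑ u, ∑ v, (A u v * ψ u ^ 2 * (if ψ v < ψ u then 1 else 0)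
        + A u v * ψ v ^ 2 * (if ψ v < ψ u then 1 else 0))) ≤ Q := by
      have swap2 : ∑ u, ∑ v, A u v * ψ v ^ 2 * (if ψ v < ψ u then 1 else 0)
          = ∑ u, ∑ v, A u v * ψ u ^ 2 * (if ψ u < ψ v then 1 else 0) := by
        rw [Finset.sum_comm]
        exact Finset.sum_congr rfl fun u _ => Finset.sum_congr rfl fun v _ => by
          rw [hAsymm u v]
      have hsplit : ∀ u v : V, A u v * ψ u ^ 2 * (if ψ v < ψ u then 1 else 0)
          + A u v * ψ u ^ 2 * (if ψ u < ψ v then 1 else 0) ≤ A u v * ψ u ^ 2 := fun u v => by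
        have hA : 0 ≤ A u v * ψ u ^ 2 := mul_nonneg (hnn u v) (sq_nonneg _)
        rcases lt_trichotomy (ψ v) (ψ u) with h | h | h
        · rw [if_pos h, if_neg (by linarith)]; linarith
        · rw [if_neg (by linarith), if_neg (by linarith)]; linarith
        · rw [if_neg (by linarith), if_pos h]; linarith
      have hQ' : ∑ u, ∑ v, A u v * ψ u ^ 2 = Q := by
        rw [hQdef]
        refine Finset.sum_congr rfl fun u _ => ?_
        rw [← Finset.sum_mul, hrow u]
      calc (∑ u, ∑ v, (A u v * ψ u ^ 2 * (if ψ v < ψ u then 1 else 0)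
            + A u v * ψ v ^ 2 * (if ψ v < ψ u then 1 else 0)))
          = (∑ u, ∑ v, A u v * ψ u ^ 2 * (if ψ v < ψ u then 1 else 0))
            + ∑ u, ∑ v, A u v * ψ v ^ 2 * (if ψ v < ψ u then 1 else 0) := by
            rw [← Finset.sum_add_distrib]
            exact Finset.sum_congr rfl fun u _ => by rw [← Finset.sum_add_distrib]
        _ = ∑ u, ∑ v, (A u v * ψ u ^ 2 * (if ψ v < ψ u then 1 else 0)
            + A u v * ψ u ^ 2 * (if ψ u < ψ v then 1 else 0)) := by
            rw [swap2, ← Finset.sum_add_distrib]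
            exact Finset.sum_congr rfl fun u _ => by rw [← Finset.sum_add_distrib]
        _ ≤ ∑ u, ∑ v, A u v * ψ u ^ 2 :=
            Finset.sum_le_sum fun u _ => Finset.sum_le_sum fun v _ => hsplit u v
        _ = Q := hQ'
    calc ∑ u, ∑ v, (Real.sqrt (A u v) * ((ψ u + ψ v) * (if ψ v < ψ u then 1 else 0))) ^ 2
        ≤ ∑ u, ∑ v, 2 * (A u v * ψ u ^ 2 * (if ψ v < ψ u then 1 else 0)
            + A u v * ψ v ^ 2 * (if ψ v < ψ u then 1 else 0)) :=
          Finset.sum_le_sum fun u _ => Finset.sum_le_sum fun v _ => step1 u v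
      _ = 2 * ∑ u, ∑ v, (A u v * ψ u ^ 2 * (if ψ v < ψ u then 1 else 0)
            + A u v * ψ v ^ 2 * (if ψ v < ψ u then 1 else 0)) := by
          rw [Finset.mul_sum]
          exact Finset.sum_congr rfl fun u _ => by rw [Finset.mul_sum]
      _ ≤ 2 * Q := by linarith [step2]
  -- combine
  rcases eq_or_lt_of_le hQnn with hQ0 | hQ0
  · rw [← hQ0, mul_zero]; exact hEnn
  · have hTnn : 0 ≤ κ * Q := mul_nonneg hκ0 hQnn
    have h1 : (κ * Q) ^ 2 ≤ T ^ 2 := by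
      apply pow_le_pow_left₀ hTnn
      exact hT
    have h2 : T ^ 2 ≤ (E / 2) * (2 * Q) := by
      rw [hTprod]
      calc (∑ p : V × V, _ * _) ^ 2 ≤ _ := hCS
        _ ≤ (E / 2) * (2 * Q) := by
          rw [hX]
          apply mul_le_mul_of_nonneg_left hY (by linarith)
    have h3 : κ ^ 2 * Q * Q ≤ E * Q := by nlinarith [h1, h2]
    exact le_of_mul_le_mul_right h3 hQ0

lemma core (A : Matrix V V ℝ) (hsym : A.IsSymm) (hnn : ∀ u v, 0 ≤ A u v)
    (d : V → ℝ) (hrow : ∀ u, ∑ v, A u v = d u) (hd : ∀ v, 0 < d v)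
    (μ : V → ℝ) (b κ : ℝ) (hκ0 : 0 ≤ κ)
    (hκle : ∀ S : Finset V,
      (∃ τ : ℝ, S = univ.filter (fun v => τ ≤ μ v) ∨ S = univ.filter (fun v => μ v ≤ τ)) →
      S.Nonempty → S ≠ univ →
      κ ≤ (∑ u ∈ S, ∑ u' ∈ Sᶜ, A u u') / min (∑ v ∈ S, d v) (∑ v ∈ Sᶜ, d v))
    (hz : ∑ v, d v * (μ v - b) = 0) :
    κ ^ 2 * ∑ v, d v * (μ v - b) ^ 2 ≤ ∑ u, ∑ v, A u v * (μ u - μ v) ^ 2 := by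
  classical
  have hEnn : (0:ℝ) ≤ ∑ u, ∑ v, A u v * (μ u - μ v) ^ 2 :=
    Finset.sum_nonneg fun u _ => Finset.sum_nonneg fun v _ =>
      mul_nonneg (hnn u v) (sq_nonneg _)
  have hQnn : (0:ℝ) ≤ ∑ v, d v * (μ v - b) ^ 2 :=
    Finset.sum_nonneg fun v _ => mul_nonneg (hd v).le (sq_nonneg _)
  rcases eq_or_lt_of_le hQnn with hQ0 | hQpos
  · rw [← hQ0, mul_zero]; exact hEnn
  -- nonempty
  obtain ⟨v0, _, _⟩ := Finset.exists_ne_zero_of_sum_ne_zero hQpos.ne'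
  have hvol : (0:ℝ) < ∑ v, d v := Finset.sum_pos (fun v _ => hd v) ⟨v0, Finset.mem_univ v0⟩
  set vol := ∑ v, d v with hvoldef
  -- median
  have himg : (univ.image μ).Nonempty := ⟨μ v0, Finset.mem_image_of_mem μ (Finset.mem_univ v0)⟩
  set Tm := (univ.image μ).filter
      (fun x => vol/2 ≤ ∑ v ∈ univ.filter (fun v => μ v ≤ x), d v) with hTmdef
  have hTmne : Tm.Nonempty := by
    refine ⟨(univ.image μ).max' himg, ?_⟩
    rw [hTmdef, Finset.mem_filter]
    refine ⟨(univ.image μ).max'_mem himg, ?_⟩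
    have : univ.filter (fun v => μ v ≤ (univ.image μ).max' himg) = univ := by
      apply Finset.filter_true_of_mem
      intro v _
      exact Finset.le_max' _ _ (Finset.mem_image_of_mem μ (Finset.mem_univ v))
    rw [this]
    linarith
  set c := Tm.min' hTmne with hcdef
  have hcmem : c ∈ Tm := Tm.min'_mem hTmne
  have hc1 : vol/2 ≤ ∑ v ∈ univ.filter (fun v => μ v ≤ c), d v :=
    (Finset.mem_filter.1 hcmem).2
  have hup : ∑ v ∈ univ.filter (fun v => ¬ μ v ≤ c), d v ≤ vol/2 := by
    have h := Finset.sum_filter_add_sum_filter_not univ (fun v => μ v ≤ c) d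
    linarith [h, hc1]
  have hdown : ∑ v ∈ univ.filter (fun v => μ v < c), d v ≤ vol/2 := by
    rcases (univ.filter (fun v => μ v < c)).eq_empty_or_nonempty with he | hne'
    · rw [he, Finset.sum_empty]; linarith
    · obtain ⟨w, hw, hwmax⟩ := Finset.exists_max_image _ μ hne'
      have hμw : μ w < c := (Finset.mem_filter.1 hw).2
      have hsub : univ.filter (fun v => μ v < c) ⊆ univ.filter (fun v => μ v ≤ μ w) := by
        intro v hv
        have h2 := hwmax v hv
        rw [Finset.mem_filter] at hv ⊢
        exact ⟨hv.1, h2⟩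
      have hle : ∑ v ∈ univ.filter (fun v => μ v < c), d v
          ≤ ∑ v ∈ univ.filter (fun v => μ v ≤ μ w), d v :=
        Finset.sum_le_sum_of_subset_of_nonneg hsub (fun v _ _ => (hd v).le)
      have hnot : ¬ (vol/2 ≤ ∑ v ∈ univ.filter (fun v => μ v ≤ μ w), d v) := by
        intro hcon
        have hmem : μ w ∈ Tm := by
          rw [hTmdef, Finset.mem_filter]
          exact ⟨Finset.mem_image_of_mem μ (Finset.mem_univ w), hcon⟩
        have := Tm.min'_le _ hmem
        rw [← hcdef] at this
        linarith
      push_neg at hnot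
      linarith
  -- the two sides
  set ψp : V → ℝ := fun v => max (μ v - c) 0 with hψpdef
  set ψm : V → ℝ := fun v => max (c - μ v) 0 with hψmdef
  have hψpnn : ∀ v, 0 ≤ ψp v := fun v => le_max_right _ _
  have hψmnn : ∀ v, 0 ≤ ψm v := fun v => le_max_right _ _
  -- cut hypotheses
  have hcutp : ∀ t : ℝ, 0 < t →
      κ * ∑ v ∈ univ.filter (fun v => t < ψp v ^ 2), d v ≤
        ∑ u ∈ univ.filter (fun v => t < ψp v ^ 2),
          ∑ v ∈ (univ.filter (fun v => t < ψp v ^ 2))ᶜ, A u v := by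
    intro t ht
    set S := univ.filter (fun v => t < ψp v ^ 2) with hSdef
    rcases S.eq_empty_or_nonempty with he | hS
    · rw [he]; simp
    · have hmemS : ∀ v ∈ S, c < μ v := by
        intro v hv
        rw [hSdef, Finset.mem_filter] at hv
        by_contra hcon
        push_neg at hcon
        have : ψp v = 0 := max_eq_right (by linarith)
        rw [this] at hv
        simp at hv
        linarith
      have hsub : S ⊆ univ.filter (fun v => ¬ μ v ≤ c) := by
        intro v hv
        rw [Finset.mem_filter]
        exact ⟨Finset.mem_univ v, not_le.2 (hmemS v hv)⟩
      have hvolS : ∑ v ∈ S, d v ≤ vol/2 :=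
        le_trans (Finset.sum_le_sum_of_subset_of_nonneg hsub (fun v _ _ => (hd v).le)) hup
      have hSuniv : S ≠ univ := by
        intro hcon
        rw [hcon] at hvolS
        rw [hvoldef] at hvolS
        linarith
      obtain ⟨w, hwS, hwmin⟩ := Finset.exists_min_image S μ hS
      have hcw : c < μ w := hmemS w hwS
      have htw : t < ψp w ^ 2 := by
        have hwS' := hwS
        rw [hSdef] at hwS'
        exact (Finset.mem_filter.1 hwS').2
      have hSeq : S = univ.filter (fun v => μ w ≤ μ v) := by
        rw [hSdef]
        ext v
        simp only [Finset.mem_filter, Finset.mem_univ, true_and]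
        constructor
        · intro hv
          exact hwmin v (by rw [hSdef, Finset.mem_filter]; exact ⟨Finset.mem_univ v, hv⟩)
        · intro hv
          have h1 : ψp w ≤ ψp v := by
            rw [hψpdef]
            simp only
            exact max_le_max (by linarith) le_rfl
          have h2 : ψp w ^ 2 ≤ ψp v ^ 2 := pow_le_pow_left₀ (hψpnn w) h1 2
          linarith
      have hκS := hκle S ⟨μ w, Or.inl hSeq⟩ hS hSuniv
      have hvolSc : ∑ v ∈ S, d v + ∑ v ∈ Sᶜ, d v = vol := Finset.sum_add_sum_compl S d
      have hmin : min (∑ v ∈ S, d v) (∑ v ∈ Sᶜ, d v) = ∑ v ∈ S, d v :=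
        min_eq_left (by linarith)
      rw [hmin] at hκS
      have hvolSpos : 0 < ∑ v ∈ S, d v := Finset.sum_pos (fun v _ => hd v) hS
      calc κ * ∑ v ∈ S, d v
          ≤ ((∑ u ∈ S, ∑ u' ∈ Sᶜ, A u u') / (∑ v ∈ S, d v)) * ∑ v ∈ S, d v :=
            mul_le_mul_of_nonneg_right hκS hvolSpos.le
        _ = ∑ u ∈ S, ∑ u' ∈ Sᶜ, A u u' := div_mul_cancel₀ _ (ne_of_gt hvolSpos)
  have hcutm : ∀ t : ℝ, 0 < t →
      κ * ∑ v ∈ univ.filter (fun v => t < ψm v ^ 2), d v ≤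
        ∑ u ∈ univ.filter (fun v => t < ψm v ^ 2),
          ∑ v ∈ (univ.filter (fun v => t < ψm v ^ 2))ᶜ, A u v := by
    intro t ht
    set S := univ.filter (fun v => t < ψm v ^ 2) with hSdef
    rcases S.eq_empty_or_nonempty with he | hS
    · rw [he]; simp
    · have hmemS : ∀ v ∈ S, μ v < c := by
        intro v hv
        rw [hSdef, Finset.mem_filter] at hv
        by_contra hcon
        push_neg at hcon
        have : ψm v = 0 := max_eq_right (by linarith)
        rw [this] at hv
        simp at hv
        linarith
      have hsub : S ⊆ univ.filter (fun v => μ v < c) := by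
        intro v hv
        rw [Finset.mem_filter]
        exact ⟨Finset.mem_univ v, hmemS v hv⟩
      have hvolS : ∑ v ∈ S, d v ≤ vol/2 :=
        le_trans (Finset.sum_le_sum_of_subset_of_nonneg hsub (fun v _ _ => (hd v).le)) hdown
      have hSuniv : S ≠ univ := by
        intro hcon
        rw [hcon] at hvolS
        rw [hvoldef] at hvolS
        linarith
      obtain ⟨w, hwS, hwmax⟩ := Finset.exists_max_image S μ hS
      have hcw : μ w < c := hmemS w hwS
      have htw : t < ψm w ^ 2 := by
        have hwS' := hwS
        rw [hSdef] at hwS'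
        exact (Finset.mem_filter.1 hwS').2
      have hSeq : S = univ.filter (fun v => μ v ≤ μ w) := by
        rw [hSdef]
        ext v
        simp only [Finset.mem_filter, Finset.mem_univ, true_and]
        constructor
        · intro hv
          exact hwmax v (by rw [hSdef, Finset.mem_filter]; exact ⟨Finset.mem_univ v, hv⟩)
        · intro hv
          have h1 : ψm w ≤ ψm v := by
            rw [hψmdef]
            simp only
            exact max_le_max (by linarith) le_rfl
          have h2 : ψm w ^ 2 ≤ ψm v ^ 2 := pow_le_pow_left₀ (hψmnn w) h1 2
          linarith
      have hκS := hκle S ⟨μ w, Or.inr hSeq⟩ hS hSuniv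
      have hvolSc : ∑ v ∈ S, d v + ∑ v ∈ Sᶜ, d v = vol := Finset.sum_add_sum_compl S d
      have hmin : min (∑ v ∈ S, d v) (∑ v ∈ Sᶜ, d v) = ∑ v ∈ S, d v :=
        min_eq_left (by linarith)
      rw [hmin] at hκS
      have hvolSpos : 0 < ∑ v ∈ S, d v := Finset.sum_pos (fun v _ => hd v) hS
      calc κ * ∑ v ∈ S, d v
          ≤ ((∑ u ∈ S, ∑ u' ∈ Sᶜ, A u u') / (∑ v ∈ S, d v)) * ∑ v ∈ S, d v :=
            mul_le_mul_of_nonneg_right hκS hvolSpos.le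
        _ = ∑ u ∈ S, ∑ u' ∈ Sᶜ, A u u' := div_mul_cancel₀ _ (ne_of_gt hvolSpos)
  have sp := side A hsym hnn d hrow κ hκ0 ψp hψpnn hcutp
  have sm := side A hsym hnn d hrow κ hκ0 ψm hψmnn hcutm
  -- combine
  have hQsplit : ∑ v, d v * ψp v ^ 2 + ∑ v, d v * ψm v ^ 2 = ∑ v, d v * (μ v - c) ^ 2 := by
    rw [← Finset.sum_add_distrib]
    refine Finset.sum_congr rfl fun v _ => ?_
    rw [hψpdef, hψmdef]
    simp only
    rcases le_total (μ v) c with h | h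
    · rw [max_eq_right (by linarith), max_eq_left (by linarith)]; ring_nf
    · rw [max_eq_left (by linarith), max_eq_right (by linarith)]; ring_nf
  have hshift : ∑ v, d v * (μ v - b) ^ 2 ≤ ∑ v, d v * (μ v - c) ^ 2 := by
    have hexp : ∀ v, d v * (μ v - c) ^ 2
        = d v * (μ v - b) ^ 2 + (2*(b-c)) * (d v * (μ v - b)) + (b-c)^2 * d v := fun v => by
      ring
    have : ∑ v, d v * (μ v - c) ^ 2
        = ∑ v, d v * (μ v - b) ^ 2 + (2*(b-c)) * ∑ v, d v * (μ v - b)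
          + (b-c)^2 * ∑ v, d v := by
      rw [Finset.mul_sum, Finset.mul_sum, ← Finset.sum_add_distrib, ← Finset.sum_add_distrib]
      exact Finset.sum_congr rfl fun v _ => hexp v
    rw [this, hz, mul_zero, add_zero]
    nlinarith [sq_nonneg (b-c), hvol]
  have hEsplit : (∑ u, ∑ v, A u v * (ψp u - ψp v) ^ 2)
      + (∑ u, ∑ v, A u v * (ψm u - ψm v) ^ 2) ≤ ∑ u, ∑ v, A u v * (μ u - μ v) ^ 2 := by
    rw [← Finset.sum_add_distrib]
    refine Finset.sum_le_sum fun u _ => ?_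
    rw [← Finset.sum_add_distrib]
    refine Finset.sum_le_sum fun v _ => ?_
    have key : (ψp u - ψp v) ^ 2 + (ψm u - ψm v) ^ 2 ≤ (μ u - μ v) ^ 2 := by
      rw [hψpdef, hψmdef]
      simp only
      rcases le_total (μ u) c with hx | hx <;> rcases le_total (μ v) c with hy | hy
      · rw [max_eq_right (by linarith), max_eq_right (by linarith),
          max_eq_left (by linarith), max_eq_left (by linarith)]
        nlinarith
      · rw [max_eq_right (by linarith), max_eq_left (by linarith),
          max_eq_left (by linarith), max_eq_right (by linarith)]
        nlinarith
      · rw [max_eq_left (by linarith), max_eq_right (by linarith),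
          max_eq_right (by linarith), max_eq_left (by linarith)]
        nlinarith
      · rw [max_eq_left (by linarith), max_eq_left (by linarith),
          max_eq_right (by linarith), max_eq_right (by linarith)]
        nlinarith
    nlinarith [hnn u v, key]
  calc κ ^ 2 * ∑ v, d v * (μ v - b) ^ 2
      ≤ κ ^ 2 * ∑ v, d v * (μ v - c) ^ 2 :=
        mul_le_mul_of_nonneg_left hshift (sq_nonneg κ)
    _ = κ ^ 2 * ∑ v, d v * ψp v ^ 2 + κ ^ 2 * ∑ v, d v * ψm v ^ 2 := by
        rw [← hQsplit]; ring
    _ ≤ (∑ u, ∑ v, A u v * (ψp u - ψp v) ^ 2) + (∑ u, ∑ v, A u v * (ψm u - ψm v) ^ 2) :=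
        add_le_add sp sm
    _ ≤ ∑ u, ∑ v, A u v * (μ u - μ v) ^ 2 := hEsplit

/-- the diagonal matrix `D⁻¹`. -/
noncomputable def Wd (A : Matrix V V ℝ) : Matrix V V ℝ :=
  Matrix.diagonal (fun v => (deg A v)⁻¹)

lemma nlap_mulVec (A : Matrix V V ℝ) (x : V → ℝ) :
    (nlap A).mulVec x = x - A.mulVec ((Wd A).mulVec x) := by
  rw [nlap, Matrix.sub_mulVec, Matrix.one_mulVec, ← Matrix.mulVec_mulVec]
  rfl

lemma deg_col (A : Matrix V V ℝ) (hsym : A.IsSymm) (u : V) : ∑ v, A v u = deg A u := by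
  rw [deg]
  exact Finset.sum_congr rfl fun v _ => by
    have := congrFun (congrFun hsym v) u
    simpa [Matrix.transpose_apply] using this.symm

lemma nlap_mulVec_piV (A : Matrix V V ℝ) (hd : ∀ v, 0 < deg A v) :
    (nlap A).mulVec (piV A) = 0 := by
  rw [nlap_mulVec]
  funext v
  have hW : (Wd A).mulVec (piV A) = fun _ => (∑ u, deg A u)⁻¹ := by
    funext u
    rw [Wd, Matrix.mulVec_diagonal, piV]
    field_simp [(hd u).ne']
  rw [hW]
  simp only [Pi.sub_apply, Pi.zero_apply, Matrix.mulVec, dotProduct]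
  rw [piV]
  rw [← Finset.sum_mul]
  rw [← deg]
  field_simp
  simp

lemma colsum_nlap (A : Matrix V V ℝ) (hsym : A.IsSymm) (hd : ∀ v, 0 < deg A v) (u : V) :
    ∑ v, nlap A v u = 0 := by
  have happ : ∀ v, nlap A v u = (if v = u then (1:ℝ) else 0) - A v u * (deg A u)⁻¹ := by
    intro v
    rw [nlap, Matrix.sub_apply, Matrix.one_apply, Matrix.mul_diagonal]
  simp only [happ]
  rw [Finset.sum_sub_distrib, Finset.sum_ite_eq' univ u (fun _ => (1:ℝ))]
  rw [← Finset.sum_mul, deg_col A hsym u]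
  simp [mul_inv_cancel₀ (hd u).ne']

lemma Wd_nlap_sym (A : Matrix V V ℝ) (hsym : A.IsSymm) (hd : ∀ v, 0 < deg A v) :
    Wd A * nlap A = (nlap A)ᵀ * Wd A := by
  ext i j
  have hA : A j i = A i j := by
    have := congrFun (congrFun hsym j) i
    simpa [Matrix.transpose_apply] using this.symm
  have hl : (Wd A * nlap A) i j = (deg A i)⁻¹ * nlap A i j := by
    rw [Wd, Matrix.diagonal_mul]
  have hr : ((nlap A)ᵀ * Wd A) i j = nlap A j i * (deg A j)⁻¹ := by
    rw [Wd, Matrix.mul_diagonal, Matrix.transpose_apply]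
  have he : ∀ a b : V, nlap A a b = (if a = b then (1:ℝ) else 0) - A a b * (deg A b)⁻¹ := by
    intro a b
    rw [nlap, Matrix.sub_apply, Matrix.one_apply, Matrix.mul_diagonal]
  rw [hl, hr, he, he]
  by_cases h : i = j
  · subst h; ring
  · rw [if_neg h, if_neg (Ne.symm h), hA]; ring

lemma sum_mulVec (M : Matrix V V ℝ) (x : V → ℝ) :
    ∑ v, M.mulVec x v = ∑ u, (∑ v, M v u) * x u := by
  simp only [Matrix.mulVec, dotProduct]
  rw [Finset.sum_comm]
  exact Finset.sum_congr rfl fun u _ => by rw [Finset.sum_mul]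


end Aux

section Main
open scoped Matrix

/-- Lemma 4.5: the negated logarithmic derivative of
`f(Δ) = sᵀ D⁻¹ (e^{−Δ𝓛} s − π)` is at least `κ²/2`, where `κ` is the minimum
conductance of a nontrivial sweep set of `μ = D⁻¹ e^{−(Δ/2)𝓛} s`. -/
theorem neg_log_deriv_ge_kappa_sq_half {V : Type} [Fintype V] [DecidableEq V]
    (A : Matrix V V ℝ) (hsym : A.IsSymm) (hnn : ∀ u v, 0 ≤ A u v)
    (hd : ∀ v, 0 < deg A v) (s : V → ℝ) (hs : ∑ v, s v = 1) (Δ : ℝ) (hΔ : 0 ≤ Δ)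
    (hf : 0 < ∑ v, s v * (heat A Δ s v - piV A v) / deg A v) :
    let μ : V → ℝ := fun v => heat A (Δ/2) s v / deg A v
    let κ : ℝ := sInf {c | ∃ S : Finset V,
      (∃ τ : ℝ, S = Finset.univ.filter (fun v => τ ≤ μ v) ∨
                S = Finset.univ.filter (fun v => μ v ≤ τ)) ∧
      S.Nonempty ∧ S ≠ Finset.univ ∧
      c = (∑ u ∈ S, ∑ u' ∈ Sᶜ, A u u')
            / min (∑ v ∈ S, deg A v) (∑ v ∈ Sᶜ, deg A v)}
    κ ^ 2 / 2 ≤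
      - deriv (fun Δ' => Real.log (∑ v, s v * (heat A Δ' s v - piV A v) / deg A v)) Δ := by
  intro μ κ
  classical
  -- basic setup
  have hV : Nonempty V := by
    by_contra h
    rw [not_nonempty_iff] at h
    rw [Finset.univ_eq_empty, Finset.sum_empty] at hf
    exact lt_irrefl 0 hf
  have hvolpos : (0:ℝ) < ∑ u, deg A u := Finset.sum_pos (fun v _ => hd v) Finset.univ_nonempty
  have hπsum : ∑ v, piV A v = 1 := by
    simp only [piV]
    rw [← Finset.sum_div]
    exact div_self hvolpos.ne'
  set g : V → ℝ := fun v => s v - piV A v with hgdef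
  have hgs : g = s - piV A := rfl
  have hgsum : ∑ v, g v = 0 := by
    simp only [hgdef]
    rw [Finset.sum_sub_distrib, hs, hπsum, sub_self]
  have hMπ : ∀ t : ℝ, (-(t • nlap A)).mulVec (piV A) = 0 := fun t => by
    rw [Matrix.neg_mulVec, Matrix.smul_mulVec, nlap_mulVec_piV A hd, smul_zero, neg_zero]
  have hcol : ∀ (t : ℝ) u, ∑ v, (-(t • nlap A)) v u = 0 := by
    intro t u
    simp only [Matrix.neg_apply, Matrix.smul_apply, smul_eq_mul]
    rw [Finset.sum_neg_distrib, ← Finset.mul_sum, colsum_nlap A hsym hd u]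
    simp
  have hWM : ∀ t : ℝ, Wd A * (-(t • nlap A)) = (-(t • nlap A))ᵀ * Wd A := by
    intro t
    rw [Matrix.transpose_neg, Matrix.transpose_smul, Matrix.mul_neg, Matrix.neg_mul,
      mul_smul_comm, Matrix.smul_mul, Wd_nlap_sym A hsym hd]
  have hheat : ∀ t : ℝ, (NormedSpace.exp (-(t • nlap A))).mulVec g
      = fun v => heat A t s v - piV A v := by
    intro t
    rw [hgs, Matrix.mulVec_sub, exp_mulVec_fixed _ _ (hMπ t)]
    rfl
  -- the linear functional
  set lm : Matrix V V ℝ →ₗ[ℝ] ℝ :=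
    { toFun := fun N => ∑ v, s v * N.mulVec s v / deg A v
      map_add' := fun a b => by
        simp only [Matrix.add_mulVec, Pi.add_apply]
        rw [← Finset.sum_add_distrib]
        exact Finset.sum_congr rfl fun v _ => by ring
      map_smul' := fun c N => by
        simp only [Matrix.smul_mulVec, Pi.smul_apply, smul_eq_mul, RingHom.id_apply]
        rw [Finset.mul_sum]
        exact Finset.sum_congr rfl fun v _ => by ring } with hlmdef
  have hlm_apply : ∀ N : Matrix V V ℝ, lm N = ∑ v, s v * N.mulVec s v / deg A v :=
    fun N => rfl
  set C : ℝ := ∑ v, s v * piV A v / deg A v with hCdef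
  have hFform : ∀ t : ℝ, (∑ v, s v * (heat A t s v - piV A v) / deg A v)
      = lm (NormedSpace.exp (t • (-(nlap A)))) - C := by
    intro t
    rw [smul_neg, hlm_apply, hCdef, ← Finset.sum_sub_distrib]
    refine Finset.sum_congr rfl fun v _ => ?_
    have h1 : heat A t s v = (NormedSpace.exp (-(t • nlap A))).mulVec s v := rfl
    rw [h1]
    ring
  -- derivative
  have hD : HasDerivAt (fun t : ℝ => lm (NormedSpace.exp (t • (-(nlap A)))))
      (lm (NormedSpace.exp (Δ • (-(nlap A))) * (-(nlap A)))) Δ := by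
    letI : SeminormedRing (Matrix V V ℝ) := Matrix.linftyOpSemiNormedRing
    letI : NormedRing (Matrix V V ℝ) := Matrix.linftyOpNormedRing
    letI : NormedAlgebra ℝ (Matrix V V ℝ) := Matrix.linftyOpNormedAlgebra
    have h1 := hasDerivAt_exp_smul_const (𝕂 := ℝ) (-(nlap A)) Δ
    exact (LinearMap.toContinuousLinearMap lm).hasFDerivAt.comp_hasDerivAt Δ h1
  have hFd : HasDerivAt (fun t : ℝ => ∑ v, s v * (heat A t s v - piV A v) / deg A v)
      (lm (NormedSpace.exp (Δ • (-(nlap A))) * (-(nlap A)))) Δ := by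
    have h2 := hD.sub_const C
    have hfun : (fun t : ℝ => ∑ v, s v * (heat A t s v - piV A v) / deg A v)
        = fun t => lm (NormedSpace.exp (t • (-(nlap A)))) - C := funext hFform
    rw [hfun]
    exact h2
  have hlog := hFd.log hf.ne'
  have hdval : deriv (fun Δ' => Real.log (∑ v, s v * (heat A Δ' s v - piV A v) / deg A v)) Δ
      = lm (NormedSpace.exp (Δ • (-(nlap A))) * (-(nlap A)))
        / (∑ v, s v * (heat A Δ s v - piV A v) / deg A v) := hlog.deriv
  rw [hdval]
  -- abbreviations
  set Eh := NormedSpace.exp (-((Δ/2) • nlap A)) with hEhdef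
  set q : V → ℝ := Eh.mulVec g with hqdef
  set b : ℝ := (∑ u, deg A u)⁻¹ with hbdef
  have hq : ∀ v, q v = deg A v * (μ v - b) := by
    intro v
    have h1 : q v = heat A (Δ/2) s v - piV A v := by
      rw [hqdef, hEhdef, hheat (Δ/2)]
    rw [h1]
    have hμv : μ v = heat A (Δ/2) s v / deg A v := rfl
    rw [hμv, piV, hbdef]
    field_simp [(hd v).ne', hvolpos.ne']
  have hEsplitM : NormedSpace.exp (-(Δ • nlap A)) = Eh * Eh := by
    rw [hEhdef,
      show -(Δ • nlap A) = -((Δ/2) • nlap A) + -((Δ/2) • nlap A) by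
        rw [← neg_add, ← add_smul]; norm_num]
    exact Matrix.exp_add_of_commute _ _ (Commute.refl _)
  have hqsum : ∑ v, q v = 0 := by
    rw [hqdef, hEhdef, sum_exp_mulVec _ (hcol (Δ/2)) g]
    exact hgsum
  have hz : ∑ v, deg A v * (μ v - b) = 0 := by
    rw [← hqsum]
    exact Finset.sum_congr rfl fun v _ => (hq v).symm
  have dotWd : ∀ x Y : V → ℝ, (∑ v, x v * Y v / deg A v) = x ⬝ᵥ (Wd A).mulVec Y := by
    intro x Y
    simp only [dotProduct, Wd, Matrix.mulVec_diagonal]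
    exact Finset.sum_congr rfl fun v _ => by rw [div_eq_mul_inv]; ring
  have hsplit_sum : ∀ Y : V → ℝ, (∑ v, s v * Y v / deg A v)
      = (∑ v, g v * Y v / deg A v) + (∑ v, Y v) / (∑ u, deg A u) := by
    intro Y
    have hπpart : ∑ v, piV A v * Y v / deg A v = (∑ v, Y v) / (∑ u, deg A u) := by
      rw [Finset.sum_div]
      refine Finset.sum_congr rfl fun v _ => ?_
      rw [piV]
      field_simp [(hd v).ne']
    rw [← hπpart, ← Finset.sum_add_distrib]
    refine Finset.sum_congr rfl fun v _ => ?_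
    have hgv : g v = s v - piV A v := rfl
    rw [hgv]
    ring
  -- value of F at Δ
  have hFΔ : (∑ v, s v * (heat A Δ s v - piV A v) / deg A v)
      = ∑ v, deg A v * (μ v - b) ^ 2 := by
    have hterm : ∀ v, heat A Δ s v - piV A v
        = (NormedSpace.exp (-(Δ • nlap A))).mulVec g v :=
      fun v => (congrFun (hheat Δ) v).symm
    calc (∑ v, s v * (heat A Δ s v - piV A v) / deg A v)
        = ∑ v, s v * (NormedSpace.exp (-(Δ • nlap A))).mulVec g v / deg A v :=
          Finset.sum_congr rfl fun v _ => by rw [hterm v]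
      _ = (∑ v, g v * (NormedSpace.exp (-(Δ • nlap A))).mulVec g v / deg A v)
          + (∑ v, (NormedSpace.exp (-(Δ • nlap A))).mulVec g v) / (∑ u, deg A u) :=
          hsplit_sum _
      _ = ∑ v, g v * (NormedSpace.exp (-(Δ • nlap A))).mulVec g v / deg A v := by
          rw [sum_exp_mulVec _ (hcol Δ) g, hgsum, zero_div, add_zero]
      _ = g ⬝ᵥ (Wd A).mulVec ((NormedSpace.exp (-(Δ • nlap A))).mulVec g) := dotWd _ _
      _ = g ⬝ᵥ (Wd A).mulVec (Eh.mulVec q) := by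
          rw [hEsplitM, ← Matrix.mulVec_mulVec, ← hqdef]
      _ = Eh.mulVec g ⬝ᵥ (Wd A).mulVec q := by
          rw [hEhdef]
          exact dot_sym_exp (Wd A) _ (hWM (Δ/2)) g q
      _ = q ⬝ᵥ (Wd A).mulVec q := by rw [← hqdef]
      _ = ∑ v, deg A v * (μ v - b) ^ 2 := by
          simp only [dotProduct, Wd, Matrix.mulVec_diagonal]
          refine Finset.sum_congr rfl fun v _ => ?_
          rw [hq v]
          have ha : deg A v ≠ 0 := (hd v).ne'
          generalize μ v - b = m
          field_simp
  -- value of the derivative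
  have hWq : (Wd A).mulVec q = fun v => μ v - b := by
    funext v
    rw [Wd, Matrix.mulVec_diagonal, hq v]
    have ha : deg A v ≠ 0 := (hd v).ne'
    generalize μ v - b = m
    field_simp
  have hLg_colsum : ∑ v, (nlap A).mulVec g v = 0 := by
    rw [sum_mulVec]
    refine Finset.sum_eq_zero fun u _ => ?_
    rw [colsum_nlap A hsym hd u, zero_mul]
  have hLs : (nlap A).mulVec s = (nlap A).mulVec g := by
    have hsg : s = g + piV A := by
      funext v
      show s v = g v + piV A v
      have : g v = s v - piV A v := rfl
      rw [this]; ring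
    rw [hsg, Matrix.mulVec_add, nlap_mulVec_piV A hd, add_zero]
  have hcomm : Commute (-((Δ/2) • nlap A)) (nlap A) :=
    ((Commute.refl (nlap A)).smul_left (Δ/2)).neg_left
  have hquad : q ⬝ᵥ (Wd A).mulVec ((nlap A).mulVec q)
      = (∑ v, deg A v * (μ v - b) ^ 2)
        - ∑ u, ∑ v, A u v * ((μ u - b) * (μ v - b)) := by
    rw [nlap_mulVec, Matrix.mulVec_sub, dotProduct_sub, hWq]
    have h1 : q ⬝ᵥ (fun v => μ v - b) = ∑ v, deg A v * (μ v - b) ^ 2 := by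
      simp only [dotProduct]
      refine Finset.sum_congr rfl fun v _ => ?_
      rw [hq v]; ring
    have h2 : q ⬝ᵥ (Wd A).mulVec (A.mulVec (fun v => μ v - b))
        = ∑ u, ∑ v, A u v * ((μ u - b) * (μ v - b)) := by
      have hc : ∀ (a x y z : ℝ), a ≠ 0 → a * x * (a⁻¹ * (z * y)) = z * (x * y) := by
        intro a x y z ha
        field_simp
      have hWdmv : ∀ Y : V → ℝ, (Wd A).mulVec Y = fun u => (deg A u)⁻¹ * Y u :=
        fun Y => funext fun u => by rw [Wd, Matrix.mulVec_diagonal]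
      rw [hWdmv]
      have hstep : q ⬝ᵥ (fun u => (deg A u)⁻¹ * (A.mulVec (fun v => μ v - b)) u)
          = ∑ u, q u * ((deg A u)⁻¹ * ∑ i, A u i * (μ i - b)) := rfl
      rw [hstep]
      refine Finset.sum_congr rfl fun u _ => ?_
      rw [hq u]
      simp only [Finset.mul_sum]
      exact Finset.sum_congr rfl fun v _ => hc _ _ _ _ (hd u).ne'
    rw [h1, h2]
  have hfd : lm (NormedSpace.exp (Δ • (-(nlap A))) * (-(nlap A)))
      = -((∑ v, deg A v * (μ v - b) ^ 2)
          - ∑ u, ∑ v, A u v * ((μ u - b) * (μ v - b))) := by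
    have hr : (NormedSpace.exp (Δ • (-(nlap A))) * (-(nlap A))).mulVec s
        = -(NormedSpace.exp (-(Δ • nlap A))).mulVec ((nlap A).mulVec g) := by
      rw [smul_neg, ← Matrix.mulVec_mulVec, Matrix.neg_mulVec, hLs, Matrix.mulVec_neg]
    rw [hlm_apply, hr]
    have hneg : ∀ v, s v * (-(NormedSpace.exp (-(Δ • nlap A))).mulVec ((nlap A).mulVec g)) v
          / deg A v
        = -(s v * ((NormedSpace.exp (-(Δ • nlap A))).mulVec ((nlap A).mulVec g)) v
          / deg A v) := by
      intro v; simp only [Pi.neg_apply]; ring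
    rw [Finset.sum_congr rfl fun v _ => hneg v, Finset.sum_neg_distrib]
    congr 1
    calc (∑ v, s v * ((NormedSpace.exp (-(Δ • nlap A))).mulVec ((nlap A).mulVec g)) v
          / deg A v)
        = (∑ v, g v * ((NormedSpace.exp (-(Δ • nlap A))).mulVec ((nlap A).mulVec g)) v
            / deg A v)
          + (∑ v, ((NormedSpace.exp (-(Δ • nlap A))).mulVec ((nlap A).mulVec g)) v)
            / (∑ u, deg A u) := hsplit_sum _
      _ = ∑ v, g v * ((NormedSpace.exp (-(Δ • nlap A))).mulVec ((nlap A).mulVec g)) v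
            / deg A v := by
          rw [sum_exp_mulVec _ (hcol Δ) _, hLg_colsum, zero_div, add_zero]
      _ = g ⬝ᵥ (Wd A).mulVec ((NormedSpace.exp (-(Δ • nlap A))).mulVec
            ((nlap A).mulVec g)) := dotWd _ _
      _ = g ⬝ᵥ (Wd A).mulVec (Eh.mulVec ((nlap A).mulVec q)) := by
          rw [hEsplitM, ← Matrix.mulVec_mulVec]
          congr 2
          rw [hEhdef, exp_mulVec_comm hcomm g, ← hqdef]
      _ = Eh.mulVec g ⬝ᵥ (Wd A).mulVec ((nlap A).mulVec q) := by
          rw [hEhdef]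
          exact dot_sym_exp (Wd A) _ (hWM (Δ/2)) g _
      _ = q ⬝ᵥ (Wd A).mulVec ((nlap A).mulVec q) := by rw [← hqdef]
      _ = (∑ v, deg A v * (μ v - b) ^ 2)
          - ∑ u, ∑ v, A u v * ((μ u - b) * (μ v - b)) := hquad
  -- energy identity
  have hEexp : (∑ u, ∑ v, A u v * (μ u - μ v) ^ 2)
      = 2 * (∑ v, deg A v * (μ v - b) ^ 2)
        - 2 * ∑ u, ∑ v, A u v * ((μ u - b) * (μ v - b)) := by
    have hterm : ∀ u v, A u v * (μ u - μ v) ^ 2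
        = A u v * (μ u - b) ^ 2 + A u v * (μ v - b) ^ 2
          - 2 * (A u v * ((μ u - b) * (μ v - b))) := fun u v => by ring
    have h1 : (∑ u, ∑ v, A u v * (μ u - b) ^ 2) = ∑ v, deg A v * (μ v - b) ^ 2 := by
      refine Finset.sum_congr rfl fun u _ => ?_
      rw [← Finset.sum_mul]
      rfl
    have h2 : (∑ u, ∑ v, A u v * (μ v - b) ^ 2) = ∑ v, deg A v * (μ v - b) ^ 2 := by
      rw [Finset.sum_comm]
      refine Finset.sum_congr rfl fun v _ => ?_
      calc (∑ u, A u v * (μ v - b) ^ 2) = (∑ u, A u v) * (μ v - b) ^ 2 := by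
            rw [Finset.sum_mul]
        _ = deg A v * (μ v - b) ^ 2 := by rw [deg_col A hsym v]
    calc (∑ u, ∑ v, A u v * (μ u - μ v) ^ 2)
        = ∑ u, ∑ v, (A u v * (μ u - b) ^ 2 + A u v * (μ v - b) ^ 2
            - 2 * (A u v * ((μ u - b) * (μ v - b)))) :=
          Finset.sum_congr rfl fun u _ => Finset.sum_congr rfl fun v _ => hterm u v
      _ = (∑ u, ∑ v, A u v * (μ u - b) ^ 2) + (∑ u, ∑ v, A u v * (μ v - b) ^ 2)
            - 2 * ∑ u, ∑ v, A u v * ((μ u - b) * (μ v - b)) := by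
          have e1 : ∀ u, (∑ v, (A u v * (μ u - b) ^ 2 + A u v * (μ v - b) ^ 2
              - 2 * (A u v * ((μ u - b) * (μ v - b)))))
              = (∑ v, A u v * (μ u - b) ^ 2) + (∑ v, A u v * (μ v - b) ^ 2)
                - 2 * ∑ v, A u v * ((μ u - b) * (μ v - b)) := fun u => by
            rw [Finset.sum_sub_distrib, Finset.sum_add_distrib, Finset.mul_sum]
          rw [Finset.sum_congr rfl fun u _ => e1 u, Finset.sum_sub_distrib,
            Finset.sum_add_distrib, Finset.mul_sum]
      _ = 2 * (∑ v, deg A v * (μ v - b) ^ 2)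
            - 2 * ∑ u, ∑ v, A u v * ((μ u - b) * (μ v - b)) := by
          rw [h1, h2]; ring
  -- κ facts
  have hub : ∀ x ∈ {c | ∃ S : Finset V,
      (∃ τ : ℝ, S = Finset.univ.filter (fun v => τ ≤ μ v) ∨
                S = Finset.univ.filter (fun v => μ v ≤ τ)) ∧
      S.Nonempty ∧ S ≠ Finset.univ ∧
      c = (∑ u ∈ S, ∑ u' ∈ Sᶜ, A u u')
            / min (∑ v ∈ S, deg A v) (∑ v ∈ Sᶜ, deg A v)}, (0:ℝ) ≤ x := by
    rintro x ⟨S, -, -, -, rfl⟩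
    apply div_nonneg
    · exact Finset.sum_nonneg fun u _ => Finset.sum_nonneg fun v _ => hnn u v
    · exact le_min (Finset.sum_nonneg fun v _ => (hd v).le)
        (Finset.sum_nonneg fun v _ => (hd v).le)
  have hκ0 : 0 ≤ κ := Real.sInf_nonneg hub
  have hκle : ∀ S : Finset V,
      (∃ τ : ℝ, S = univ.filter (fun v => τ ≤ μ v) ∨ S = univ.filter (fun v => μ v ≤ τ)) →
      S.Nonempty → S ≠ univ →
      κ ≤ (∑ u ∈ S, ∑ u' ∈ Sᶜ, A u u') / min (∑ v ∈ S, deg A v) (∑ v ∈ Sᶜ, deg A v) := by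
    intro S hsw hne hnuniv
    exact csInf_le ⟨0, hub⟩ ⟨S, hsw, hne, hnuniv, rfl⟩
  have hcore := core A hsym hnn (deg A) (fun u => rfl) hd μ b κ hκ0 hκle hz
  -- finish
  have hQpos : 0 < ∑ v, deg A v * (μ v - b) ^ 2 := by rw [← hFΔ]; exact hf
  rw [hfd, hFΔ, neg_div, neg_neg, le_div_iff₀ hQpos]
  rw [hEexp] at hcore
  linarith


end Main

end GraphHeat
end
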